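/- arXiv:1902.08272 — 3 statements merged into one kernel-verified Lean document; each statement's English description precedes it below -/
import Mathlib

section
/- For every total parsing expression grammar G over a finite alphabet Σ there exists a scaffolding automaton A with input alphabet Σ such that A decides exactly the reversal of the language recognised by G, i.e. L(A) = { xʳ : x ∈ L(G) }. -/
/-! ## Parsing expression grammars -/

/-- Parsing expressions over terminal alphabet `α` and non-terminal alphabet `ν`. -/
inductive PExp (α : Type) (ν : Type) : Type where
  | eps : PExp α ν
  | fail : PExp α ν
  | term (a : α) : PExp α ν
  | nt (A : ν) : PExp α ν
  | notP (e : PExp α ν) : PExp α ν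
  | andP (e : PExp α ν) : PExp α ν
  | seq (e₁ e₂ : PExp α ν) : PExp α ν
  | choice (e₁ e₂ : PExp α ν) : PExp α ν

/-- Big-step semantics of the recognition map `Rec` of a PEG with rules `R`:
`PegRec R e x r` holds iff `Rec(e,x)` is defined and equals `r`, where
`r = none` codes `FAIL` and `r = some y` codes the consumed prefix `y` of `x`. -/
inductive PegRec {α ν : Type} (R : ν → PExp α ν) :
    PExp α ν → List α → Option (List α) → Prop where
  | eps (x : List α) : PegRec R .eps x (some [])
  | fail (x : List α) : PegRec R .fail x none
  | termOk (a : α) (z : List α) : PegRec R (.term a) (a :: z) (some [a])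
  | termMismatch (a b : α) (z : List α) (h : a ≠ b) : PegRec R (.term a) (b :: z) none
  | termNil (a : α) : PegRec R (.term a) [] none
  | notFail (e : PExp α ν) (x : List α) :
      PegRec R e x none → PegRec R (.notP e) x (some [])
  | notSucc (e : PExp α ν) (x y : List α) :
      PegRec R e x (some y) → PegRec R (.notP e) x none
  | andSucc (e : PExp α ν) (x y : List α) :
      PegRec R e x (some y) → PegRec R (.andP e) x (some [])
  | andFail (e : PExp α ν) (x : List α) :
      PegRec R e x none → PegRec R (.andP e) x none
  | seqOk (e₁ e₂ : PExp α ν) (y₁ z y₂ : List α) :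
      PegRec R e₁ (y₁ ++ z) (some y₁) → PegRec R e₂ z (some y₂) →
      PegRec R (.seq e₁ e₂) (y₁ ++ z) (some (y₁ ++ y₂))
  | seqFail₁ (e₁ e₂ : PExp α ν) (x : List α) :
      PegRec R e₁ x none → PegRec R (.seq e₁ e₂) x none
  | seqFail₂ (e₁ e₂ : PExp α ν) (y₁ z : List α) :
      PegRec R e₁ (y₁ ++ z) (some y₁) → PegRec R e₂ z none →
      PegRec R (.seq e₁ e₂) (y₁ ++ z) none
  | choice₁ (e₁ e₂ : PExp α ν) (x y : List α) :
      PegRec R e₁ x (some y) → PegRec R (.choice e₁ e₂) x (some y)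
  | choice₂ (e₁ e₂ : PExp α ν) (x : List α) (r : Option (List α)) :
      PegRec R e₁ x none → PegRec R e₂ x r → PegRec R (.choice e₁ e₂) x r
  | ntRule (A : ν) (x : List α) (r : Option (List α)) :
      PegRec R (R A) x r → PegRec R (.nt A) x r

/-- A parsing expression grammar over the (finite) terminal alphabet `α`:
a finite alphabet `ν` of non-terminals, a rule for each non-terminal,
and a starting non-terminal. -/
structure PEG (α : Type) : Type 1 where
  ν : Type
  finNT : Finite ν
  R : ν → PExp α ν
  S : ν

/-- A PEG is total if its recognition map is total (defined on every expression and input). -/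
def PEG.Total {α : Type} (G : PEG α) : Prop :=
  ∀ (e : PExp α G.ν) (x : List α), ∃ r, PegRec G.R e x r

/-- The language recognised by a PEG: strings on which the starting
non-terminal succeeds and consumes the whole input. -/
def PEG.Lang {α : Type} (G : PEG α) : Set (List α) :=
  { x | PegRec G.R (.nt G.S) x (some x) }

/-- A language is in the class `PEG` iff some total parsing expression grammar recognises it. -/
def IsPEGLang {α : Type} (L : Set (List α)) : Prop :=
  ∃ G : PEG α, G.Total ∧ G.Lang = L

/-! ## Scaffolding automata -/

/-- A `(d,Γ)`-scaffold: nodes `0, …, top`, each node `v` carrying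
`d` (possibly missing) edges pointing backwards (to nodes `≤ v`)
and an optional label from `Γ`.  (The data of the functions at indices
beyond `top` is irrelevant.) -/
structure Scaffold (d : ℕ) (Γ : Type) : Type where
  top : ℕ
  edge : ℕ → Fin d → Option ℕ
  label : ℕ → Option Γ
  back : ∀ v i w, edge v i = some w → w ≤ v

/-- The type of `k`-neighbourhoods for `(d,Γ)`-scaffolds:
`N₀ = Γ ∪ {∅}` and `N_{k+1} = (Γ ∪ {∅}) × (N_k ∪ {∅})^d`. -/
def Nbhd (d : ℕ) (Γ : Type) : ℕ → Type
  | 0 => Option Γ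
  | k + 1 => Option Γ × (Fin d → Option (Nbhd d Γ k))

/-- The `k`-neighbourhood of node `v` in a scaffold. -/
def Scaffold.nbhd {d : ℕ} {Γ : Type} (S : Scaffold d Γ) : (k : ℕ) → ℕ → Nbhd d Γ k
  | 0, v => S.label v
  | k + 1, v => (S.label v, fun i => (S.edge v i).map (S.nbhd k))

/-- The specification of an edge of a newly created node: either a path
(a sequence of at most `k` edge indices, to be followed from the old top node),
or `SELF` (the new node itself), or `missing` (no edge, `∅`). -/
inductive PathSpec (d k : ℕ) : Type where
  | path (l : List (Fin d)) (h : l.length ≤ k) : PathSpec d k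
  | self : PathSpec d k
  | missing : PathSpec d k

/-- Following a path (sequence of edge indices) from node `v` in a scaffold;
returns `none` if the path is invalid. -/
def Scaffold.follow {d : ℕ} {Γ : Type} (S : Scaffold d Γ) :
    List (Fin d) → ℕ → Option ℕ
  | [], v => some v
  | i :: l, v => (S.edge v i).bind (S.follow l)

theorem Scaffold.follow_le {d : ℕ} {Γ : Type} (S : Scaffold d Γ) :
    ∀ (l : List (Fin d)) (v w : ℕ), S.follow l v = some w → w ≤ v := by
  intro l
  induction l with
  | nil =>
    intro v w h
    simp only [Scaffold.follow, Option.some_inj] at h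
    omega
  | cons i l ih =>
    intro v w h
    simp only [Scaffold.follow, Option.bind_eq_some_iff] at h
    obtain ⟨u, hu, hw⟩ := h
    exact le_trans (ih u w hw) (S.back v i u hu)

/-- The initial scaffold: a single unlabelled node with all edges missing. -/
def Scaffold.init (d : ℕ) (Γ : Type) : Scaffold d Γ where
  top := 0
  edge := fun _ _ => none
  label := fun _ => none
  back := by intro v i w h; exact absurd h (by simp)

/-- Appending a new top node with label `γ`, whose edges are determined by the
path specifications `ps` (followed from the old top node). -/
def Scaffold.extend {d k : ℕ} {Γ : Type} (S : Scaffold d Γ) (γ : Γ)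
    (ps : Fin d → PathSpec d k) : Scaffold d Γ where
  top := S.top + 1
  edge := fun v j =>
    if v = S.top + 1 then
      match ps j with
      | .missing => none
      | .self => some (S.top + 1)
      | .path l _ => S.follow l S.top
    else if v ≤ S.top then S.edge v j else none
  label := fun v =>
    if v = S.top + 1 then some γ else if v ≤ S.top then S.label v else none
  back := by
    intro v j w h
    try dsimp only at h
    split_ifs at h with h1 h2
    · subst h1
      rcases hps : ps j with ⟨l, hl⟩ | _ | _
      · rw [hps] at h
        have := S.follow_le l S.top w h
        omega
      · rw [hps] at h
        simp only [Option.some_inj] at h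
        omega
      · rw [hps] at h
        exact absurd h (by simp)
    · exact S.back v j w h

/-- A scaffolding automaton with input alphabet `σ`. -/
structure SAutomaton (σ : Type) : Type 1 where
  /-- degree -/
  d : ℕ
  dpos : 1 ≤ d
  /-- working alphabet -/
  Γ : Type
  finΓ : Finite Γ
  /-- distance -/
  k : ℕ
  /-- states -/
  Q : Type
  finQ : Finite Q
  /-- initial state -/
  q0 : Q
  /-- accepting states -/
  F : Set Q
  /-- transition function -/
  δ : Q → σ → Nbhd d Γ k → Q × Γ × (Fin d → PathSpec d k)

/-- A single step of computation of a scaffolding automaton on input symbol `a`. -/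
def SAutomaton.step {σ : Type} (A : SAutomaton σ) (a : σ) :
    A.Q × Scaffold A.d A.Γ → A.Q × Scaffold A.d A.Γ :=
  fun c =>
    let out := A.δ c.1 a (c.2.nbhd A.k c.2.top)
    (out.1, c.2.extend out.2.1 out.2.2)

/-- The state and scaffold reached by a scaffolding automaton after reading `x`. -/
def SAutomaton.run {σ : Type} (A : SAutomaton σ) (x : List σ) :
    A.Q × Scaffold A.d A.Γ :=
  x.foldl (fun c a => A.step a c) (A.q0, Scaffold.init A.d A.Γ)

/-- The language decided by a scaffolding automaton. -/
def SAutomaton.Lang {σ : Type} (A : SAutomaton σ) : Set (List σ) :=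
  { x | (A.run x).1 ∈ A.F }

/-! ## Auxiliary development -/

set_option linter.unusedSectionVars false
namespace PegScaf

variable {σ ν : Type}

/-- Determinism of the PEG semantics. -/
theorem det {R : ν → PExp σ ν} {e : PExp σ ν} {x : List σ} {r₁ : Option (List σ)}
    (h₁ : PegRec R e x r₁) : ∀ {r₂}, PegRec R e x r₂ → r₁ = r₂ := by
  induction h₁ with
  | eps x => intro r₂ h₂; cases h₂; rfl
  | fail x => intro r₂ h₂; cases h₂; rfl
  | termOk a z => intro r₂ h₂; cases h₂ with
    | termOk => rfl
    | termMismatch _ _ _ h => exact absurd rfl h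
  | termMismatch a b z h => intro r₂ h₂; cases h₂ with
    | termOk => exact absurd rfl h
    | termMismatch => rfl
  | termNil a => intro r₂ h₂; cases h₂; rfl
  | notFail e x _ ih => intro r₂ h₂; cases h₂ with
    | notFail => rfl
    | notSucc _ _ y hy => exact absurd (ih hy).symm (by simp)
  | notSucc e x y _ ih => intro r₂ h₂; cases h₂ with
    | notFail _ _ hf => exact absurd (ih hf) (by simp)
    | notSucc => rfl
  | andSucc e x y _ ih => intro r₂ h₂; cases h₂ with
    | andSucc => rfl
    | andFail _ _ hf => exact absurd (ih hf) (by simp)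
  | andFail e x _ ih => intro r₂ h₂; cases h₂ with
    | andSucc _ _ y hy => exact absurd (ih hy).symm (by simp)
    | andFail => rfl
  | seqOk e₁ e₂ y₁ z y₂ h1 h2 ih1 ih2 =>
    intro r₂ h₂
    generalize hx0 : y₁ ++ z = x at h₂
    cases h₂ with
    | seqOk e₁ e₂ y₁' z' y₂' h1' h2' =>
      rw [← hx0] at h1'
      have hy : y₁ = y₁' := by have := ih1 h1'; simpa using this
      subst hy
      have hz : z = z' := List.append_cancel_left hx0
      subst hz
      have := ih2 h2'; simpa using this
    | seqFail₁ _ _ _ h1' =>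
      rw [← hx0] at h1'
      exact absurd (ih1 h1') (by simp)
    | seqFail₂ e₁ e₂ y₁' z' h1' h2' =>
      rw [← hx0] at h1'
      have hy : y₁ = y₁' := by have := ih1 h1'; simpa using this
      subst hy
      have hz : z = z' := List.append_cancel_left hx0
      subst hz
      exact absurd (ih2 h2') (by simp)
  | seqFail₁ e₁ e₂ x _ ih1 =>
    intro r₂ h₂
    cases h₂ with
    | seqOk _ _ y₁' z' y₂' h1' h2' => exact absurd (ih1 h1') (by simp)
    | seqFail₁ => rfl
    | seqFail₂ _ _ y₁' z' h1' h2' => exact absurd (ih1 h1') (by simp)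
  | seqFail₂ e₁ e₂ y₁ z h1 h2 ih1 ih2 =>
    intro r₂ h₂
    generalize hx0 : y₁ ++ z = x at h₂
    cases h₂ with
    | seqOk e₁ e₂ y₁' z' y₂' h1' h2' =>
      rw [← hx0] at h1'
      have hy : y₁ = y₁' := by have := ih1 h1'; simpa using this
      subst hy
      have hz : z = z' := List.append_cancel_left hx0
      subst hz
      exact absurd (ih2 h2').symm (by simp)
    | seqFail₁ _ _ _ h1' =>
      rw [← hx0] at h1'
    | seqFail₂ => rfl
  | choice₁ e₁ e₂ x y h1 ih1 =>
    intro r₂ h₂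
    cases h₂ with
    | choice₁ _ _ _ y' h1' => exact ih1 h1'
    | choice₂ _ _ _ r h1' h2' => exact absurd (ih1 h1') (by simp)
  | choice₂ e₁ e₂ x r h1 h2 ih1 ih2 =>
    intro r₂ h₂
    cases h₂ with
    | choice₁ _ _ _ y' h1' => exact absurd (ih1 h1').symm (by simp)
    | choice₂ _ _ _ r' h1' h2' => exact ih2 h2'
  | ntRule A x r h ih =>
    intro r₂ h₂
    cases h₂ with
    | ntRule _ _ _ h' => exact ih h'

/-- Success consumes a prefix of the input. -/
theorem consumed_prefix {R : ν → PExp σ ν} {e : PExp σ ν} {x : List σ} {r : Option (List σ)}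
    (h : PegRec R e x r) : ∀ y, r = some y → ∃ z, x = y ++ z := by
  induction h with
  | eps x => intro y hy; cases hy; exact ⟨x, rfl⟩
  | fail x => intro y hy; cases hy
  | termOk a z => intro y hy; cases hy; exact ⟨z, rfl⟩
  | termMismatch a b z h => intro y hy; cases hy
  | termNil a => intro y hy; cases hy
  | notFail e x _ _ => intro y hy; cases hy; exact ⟨x, rfl⟩
  | notSucc e x y _ _ => intro y hy; cases hy
  | andSucc e x y _ _ => intro y hy; cases hy; exact ⟨x, rfl⟩
  | andFail e x _ _ => intro y hy; cases hy
  | seqOk e₁ e₂ y₁ z y₂ h1 h2 ih1 ih2 =>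
    intro y hy
    cases hy
    obtain ⟨z₂, hz₂⟩ := ih2 y₂ rfl
    exact ⟨z₂, by rw [hz₂, List.append_assoc]⟩
  | seqFail₁ _ _ _ _ _ => intro y hy; cases hy
  | seqFail₂ _ _ _ _ _ _ _ _ => intro y hy; cases hy
  | choice₁ e₁ e₂ x y h1 ih1 => intro y' hy; exact ih1 y' hy
  | choice₂ e₁ e₂ x r h1 h2 ih1 ih2 => intro y' hy; exact ih2 y' hy
  | ntRule A x r h ih => intro y hy; exact ih y hy

/-! ### A fuel-based evaluator for the PEG semantics -/

variable [DecidableEq σ]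

/-- Fuel-based evaluator: `none` means out of fuel. -/
def pegEval (R : ν → PExp σ ν) : ℕ → PExp σ ν → List σ → Option (Option (List σ))
  | 0, _, _ => none
  | _ + 1, .eps, _ => some (some [])
  | _ + 1, .fail, _ => some none
  | _ + 1, .term _, [] => some none
  | _ + 1, .term a, b :: _ => if a = b then some (some [a]) else some none
  | n + 1, .nt A, x => pegEval R n (R A) x
  | n + 1, .notP e, x =>
      (pegEval R n e x).map (fun r => if r.isSome then none else some [])
  | n + 1, .andP e, x =>
      (pegEval R n e x).map (fun r => if r.isSome then some [] else none)
  | n + 1, .seq e₁ e₂, x =>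
      (pegEval R n e₁ x).bind (fun r =>
        match r with
        | none => some none
        | some y₁ => (pegEval R n e₂ (x.drop y₁.length)).map (fun r₂ => r₂.map (y₁ ++ ·)))
  | n + 1, .choice e₁ e₂, x =>
      (pegEval R n e₁ x).bind (fun r =>
        match r with
        | some y => some (some y)
        | none => pegEval R n e₂ x)

theorem pegEval_mono {R : ν → PExp σ ν} :
    ∀ {n m : ℕ}, n ≤ m → ∀ {e x r}, pegEval R n e x = some r → pegEval R m e x = some r := by
  intro n
  induction n with
  | zero => intro m _ e x r h; simp [pegEval] at h
  | succ n ih =>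
    intro m hm e x r h
    obtain ⟨m, rfl⟩ : ∃ m', m = m' + 1 := ⟨m - 1, by omega⟩
    have hm' : n ≤ m := by omega
    cases e with
    | eps => exact h
    | fail => exact h
    | term a => cases x <;> exact h
    | nt A => exact ih hm' h
    | notP e =>
      simp only [pegEval, Option.map_eq_some_iff] at h ⊢
      obtain ⟨r', hr', rfl⟩ := h
      exact ⟨r', ih hm' hr', rfl⟩
    | andP e =>
      simp only [pegEval, Option.map_eq_some_iff] at h ⊢
      obtain ⟨r', hr', rfl⟩ := h
      exact ⟨r', ih hm' hr', rfl⟩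
    | seq e₁ e₂ =>
      simp only [pegEval, Option.bind_eq_some_iff] at h ⊢
      obtain ⟨r₁, hr₁, h₂⟩ := h
      refine ⟨r₁, ih hm' hr₁, ?_⟩
      cases r₁ with
      | none => exact h₂
      | some y₁ =>
        simp only [Option.map_eq_some_iff] at h₂ ⊢
        obtain ⟨r₂, hr₂, rfl⟩ := h₂
        exact ⟨r₂, ih hm' hr₂, rfl⟩
    | choice e₁ e₂ =>
      simp only [pegEval, Option.bind_eq_some_iff] at h ⊢
      obtain ⟨r₁, hr₁, h₂⟩ := h
      refine ⟨r₁, ih hm' hr₁, ?_⟩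
      cases r₁ with
      | none => exact ih hm' h₂
      | some y₁ => exact h₂

theorem pegEval_sound {R : ν → PExp σ ν} :
    ∀ {n : ℕ} {e x r}, pegEval R n e x = some r → PegRec R e x r := by
  intro n
  induction n with
  | zero => intro e x r h; simp [pegEval] at h
  | succ n ih =>
    intro e x r h
    cases e with
    | eps => cases h; exact .eps x
    | fail => cases h; exact .fail x
    | term a =>
      cases x with
      | nil => cases h; exact .termNil a
      | cons b z =>
        by_cases hab : a = b
        · subst hab; simp [pegEval] at h; cases h; exact .termOk a z
        · simp [pegEval, hab] at h; cases h; exact .termMismatch a b z hab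
    | nt A => exact .ntRule A x r (ih h)
    | notP e =>
      simp only [pegEval, Option.map_eq_some_iff] at h
      obtain ⟨r', hr', rfl⟩ := h
      cases r' with
      | none => exact .notFail e x (ih hr')
      | some y => exact .notSucc e x y (ih hr')
    | andP e =>
      simp only [pegEval, Option.map_eq_some_iff] at h
      obtain ⟨r', hr', rfl⟩ := h
      cases r' with
      | none => exact .andFail e x (ih hr')
      | some y => exact .andSucc e x y (ih hr')
    | seq e₁ e₂ =>
      simp only [pegEval, Option.bind_eq_some_iff] at h
      obtain ⟨r₁, hr₁, h₂⟩ := h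
      cases r₁ with
      | none => cases h₂; exact .seqFail₁ e₁ e₂ x (ih hr₁)
      | some y₁ =>
        have h1 : PegRec R e₁ x (some y₁) := ih hr₁
        obtain ⟨z, rfl⟩ := PegScaf.consumed_prefix h1 y₁ rfl
        have h₂ : (pegEval R n e₂ (((y₁ ++ z) : List σ).drop y₁.length)).map
            (fun r₂ => r₂.map (y₁ ++ ·)) = some r := h₂
        rw [List.drop_left] at h₂
        simp only [Option.map_eq_some_iff] at h₂
        obtain ⟨r₂, hr₂, rfl⟩ := h₂
        cases r₂ with
        | none => exact .seqFail₂ e₁ e₂ y₁ z h1 (ih hr₂)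
        | some y₂ => exact .seqOk e₁ e₂ y₁ z y₂ h1 (ih hr₂)
    | choice e₁ e₂ =>
      simp only [pegEval, Option.bind_eq_some_iff] at h
      obtain ⟨r₁, hr₁, h₂⟩ := h
      cases r₁ with
      | none => exact .choice₂ e₁ e₂ x r (ih hr₁) (ih h₂)
      | some y₁ => cases h₂; exact .choice₁ e₁ e₂ x y₁ (ih hr₁)

theorem pegEval_complete {R : ν → PExp σ ν} {e x r} (h : PegRec R e x r) :
    ∃ n, pegEval R n e x = some r := by
  induction h with
  | eps x => exact ⟨1, rfl⟩
  | fail x => exact ⟨1, rfl⟩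
  | termOk a z => exact ⟨1, by simp [pegEval]⟩
  | termMismatch a b z h => exact ⟨1, by simp [pegEval, h]⟩
  | termNil a => exact ⟨1, rfl⟩
  | notFail e x _ ih =>
    obtain ⟨n, hn⟩ := ih
    exact ⟨n + 1, by simp [pegEval, hn]⟩
  | notSucc e x y _ ih =>
    obtain ⟨n, hn⟩ := ih
    exact ⟨n + 1, by simp [pegEval, hn]⟩
  | andSucc e x y _ ih =>
    obtain ⟨n, hn⟩ := ih
    exact ⟨n + 1, by simp [pegEval, hn]⟩
  | andFail e x _ ih =>
    obtain ⟨n, hn⟩ := ih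
    exact ⟨n + 1, by simp [pegEval, hn]⟩
  | seqOk e₁ e₂ y₁ z y₂ _ _ ih1 ih2 =>
    obtain ⟨n₁, hn₁⟩ := ih1
    obtain ⟨n₂, hn₂⟩ := ih2
    refine ⟨max n₁ n₂ + 1, ?_⟩
    have h1 := pegEval_mono (le_max_left n₁ n₂) hn₁
    have h2 := pegEval_mono (le_max_right n₁ n₂) hn₂
    simp [pegEval, h1, List.drop_left, h2]
  | seqFail₁ e₁ e₂ x _ ih1 =>
    obtain ⟨n, hn⟩ := ih1
    exact ⟨n + 1, by simp [pegEval, hn]⟩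
  | seqFail₂ e₁ e₂ y₁ z _ _ ih1 ih2 =>
    obtain ⟨n₁, hn₁⟩ := ih1
    obtain ⟨n₂, hn₂⟩ := ih2
    refine ⟨max n₁ n₂ + 1, ?_⟩
    have h1 := pegEval_mono (le_max_left n₁ n₂) hn₁
    have h2 := pegEval_mono (le_max_right n₁ n₂) hn₂
    simp [pegEval, h1, List.drop_left, h2]
  | choice₁ e₁ e₂ x y _ ih1 =>
    obtain ⟨n, hn⟩ := ih1
    exact ⟨n + 1, by simp [pegEval, hn]⟩
  | choice₂ e₁ e₂ x r _ _ ih1 ih2 =>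
    obtain ⟨n₁, hn₁⟩ := ih1
    obtain ⟨n₂, hn₂⟩ := ih2
    refine ⟨max n₁ n₂ + 1, ?_⟩
    have h1 := pegEval_mono (le_max_left n₁ n₂) hn₁
    have h2 := pegEval_mono (le_max_right n₁ n₂) hn₂
    simp [pegEval, h1, h2]
  | ntRule A x r _ ih =>
    obtain ⟨n, hn⟩ := ih
    exact ⟨n + 1, by simpa [pegEval] using hn⟩

/-! ### Untyped neighbourhood trees -/

inductive NTree (d : ℕ) (Γ : Type) : Type where
  | node (lab : Option Γ) (ch : Fin d → Option (NTree d Γ)) : NTree d Γ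

def NTree.lab {d : ℕ} {Γ : Type} : NTree d Γ → Option Γ
  | .node l _ => l

def NTree.read {d : ℕ} {Γ : Type} : NTree d Γ → List (Fin d) → Option (NTree d Γ)
  | t, [] => some t
  | .node _ ch, i :: l => (ch i).bind (fun t => t.read l)

def toT {d : ℕ} {Γ : Type} : (k : ℕ) → Nbhd d Γ k → NTree d Γ
  | 0, l => .node l (fun _ => none)
  | k + 1, x => .node (Prod.fst x) (fun i => ((Prod.snd x) i).map (toT k))

theorem toT_lab {d : ℕ} {Γ : Type} (S : Scaffold d Γ) :
    ∀ (k v : ℕ), (toT k (S.nbhd k v)).lab = S.label v := by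
  intro k v
  cases k with
  | zero => rfl
  | succ k => rfl

theorem toT_read {d : ℕ} {Γ : Type} (S : Scaffold d Γ) :
    ∀ (l : List (Fin d)) (k v : ℕ), l.length ≤ k →
      ((toT k (S.nbhd k v)).read l).map NTree.lab = (S.follow l v).map S.label := by
  intro l
  induction l with
  | nil =>
    intro k v _
    simp [NTree.read, Scaffold.follow, toT_lab]
  | cons i l ih =>
    intro k v hl
    obtain ⟨k, rfl⟩ : ∃ k', k = k' + 1 := ⟨k - 1, by simp at hl; omega⟩
    have hl' : l.length ≤ k := by simp at hl; omega
    show ((((S.nbhd (k+1) v).2 i).map (toT k)).bind (fun t => t.read l)).map NTree.lab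
        = ((S.edge v i).bind (S.follow l)).map S.label
    have : (S.nbhd (k+1) v).2 i = (S.edge v i).map (S.nbhd k) := rfl
    rw [this]
    cases hE : S.edge v i with
    | none => simp
    | some w =>
      simp only [Option.map_some, Option.bind_some]
      exact ih k w hl'

theorem follow_append {d : ℕ} {Γ : Type} (S : Scaffold d Γ) :
    ∀ (l : List (Fin d)) (i : Fin d) (v : ℕ),
      S.follow (l ++ [i]) v = (S.follow l v).bind (fun w => S.edge w i) := by
  intro l
  induction l with
  | nil =>
    intro i v
    simp [Scaffold.follow]
  | cons j l ih =>
    intro i v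
    show (S.edge v j).bind (S.follow (l ++ [i])) = ((S.edge v j).bind (S.follow l)).bind _
    cases S.edge v j with
    | none => rfl
    | some w => simpa using ih i w

/-! ### Subexpressions -/

def subs : PExp σ ν → List (PExp σ ν)
  | .notP e => .notP e :: subs e
  | .andP e => .andP e :: subs e
  | .seq e₁ e₂ => .seq e₁ e₂ :: (subs e₁ ++ subs e₂)
  | .choice e₁ e₂ => .choice e₁ e₂ :: (subs e₁ ++ subs e₂)
  | e => [e]

theorem self_mem_subs (e : PExp σ ν) : e ∈ subs e := by
  cases e <;> simp [subs]

theorem subs_trans : ∀ (f e : PExp σ ν), e ∈ subs f → subs e ⊆ subs f := by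
  intro f
  induction f with
  | eps => intro e he; simp [subs] at he; subst he; simp [subs]
  | fail => intro e he; simp [subs] at he; subst he; simp [subs]
  | term a => intro e he; simp [subs] at he; subst he; simp [subs]
  | nt A => intro e he; simp [subs] at he; subst he; simp [subs]
  | notP f ih =>
    intro e he
    simp only [subs, List.mem_cons] at he
    rcases he with rfl | he
    · exact fun _ h => h
    · exact fun x hx => List.mem_cons_of_mem _ (ih e he hx)
  | andP f ih =>
    intro e he
    simp only [subs, List.mem_cons] at he
    rcases he with rfl | he
    · exact fun _ h => h
    · exact fun x hx => List.mem_cons_of_mem _ (ih e he hx)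
  | seq f₁ f₂ ih1 ih2 =>
    intro e he
    simp only [subs, List.mem_cons, List.mem_append] at he
    rcases he with rfl | he | he
    · exact fun _ h => h
    · exact fun x hx => List.mem_cons_of_mem _ (List.mem_append_left _ (ih1 e he hx))
    · exact fun x hx => List.mem_cons_of_mem _ (List.mem_append_right _ (ih2 e he hx))
  | choice f₁ f₂ ih1 ih2 =>
    intro e he
    simp only [subs, List.mem_cons, List.mem_append] at he
    rcases he with rfl | he | he
    · exact fun _ h => h
    · exact fun x hx => List.mem_cons_of_mem _ (List.mem_append_left _ (ih1 e he hx))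
    · exact fun x hx => List.mem_cons_of_mem _ (List.mem_append_right _ (ih2 e he hx))

/-! ### A counting lemma -/

theorem countP_lt_countP {α : Type} (p q : α → Bool)
    (hpq : ∀ x, p x = true → q x = true) :
    ∀ (l : List α) (x : α), x ∈ l → q x = true → p x = false →
      l.countP p < l.countP q := by
  intro l
  induction l with
  | nil => intro x hx; simp at hx
  | cons a l ih =>
    intro x hx hq hp
    have hmono := List.countP_mono_left (l := l) (fun y _ hy => hpq y hy)
    rcases List.mem_cons.mp hx with rfl | hx
    · rw [List.countP_cons, List.countP_cons, hp, hq]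
      simpa using Nat.lt_succ_of_le hmono
    · have := ih x hx hq hp
      rw [List.countP_cons, List.countP_cons]
      by_cases hpa : p a = true
      · rw [hpa, hpq a hpa]; simpa using this
      · rw [Bool.not_eq_true] at hpa
        rw [hpa]
        simp only [ite_false, Bool.false_eq_true, add_zero]
        rcases hqa : q a <;> simp <;> omega

/-- Results of the neighbourhood evaluator. -/
inductive EvRes (d : ℕ) : Type where
  | fail : EvRes d
  | self : EvRes d
  | targ (l : List (Fin d)) : EvRes d

/-! ### The construction for a fixed total PEG -/

section Construction

variable (G : PEG σ)

theorem ntListEx : ∃ l : List G.ν, ∀ A, A ∈ l := by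
  have := G.finNT
  have : Fintype G.ν := Fintype.ofFinite _
  exact ⟨Finset.univ.toList, fun A => by simp⟩

noncomputable def NTlist : List G.ν := (ntListEx G).choose

theorem mem_NTlist (A : G.ν) : A ∈ NTlist G := (ntListEx G).choose_spec A

/-- The list of all relevant expressions. -/
noncomputable def EL : List (PExp σ G.ν) := (NTlist G).flatMap (fun A => subs (G.R A))

theorem R_mem_EL (A : G.ν) : G.R A ∈ EL G := by
  rw [EL, List.mem_flatMap]
  exact ⟨A, mem_NTlist G A, self_mem_subs _⟩

theorem EL_closed {e : PExp σ G.ν} (he : e ∈ EL G) : subs e ⊆ EL G := by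
  rw [EL, List.mem_flatMap] at he
  obtain ⟨A, _, hA⟩ := he
  intro x hx
  rw [EL, List.mem_flatMap]
  exact ⟨A, mem_NTlist G A, subs_trans _ _ hA hx⟩

theorem EL_pos : 0 < (EL G).length :=
  List.length_pos_iff.mpr (List.ne_nil_of_mem (R_mem_EL G G.S))

/-- Degree of the automaton. -/
noncomputable abbrev dG : ℕ := (EL G).length

/-- Distance (= fuel) of the automaton. -/
noncomputable abbrev kG : ℕ := dG G + 1

/-- Working alphabet of the automaton. -/
abbrev ΓG : Type := Fin (dG G) → Bool

theorem idxEx (e : PExp σ G.ν) : ∃ i : Fin (dG G), e ∈ EL G → (EL G).get i = e := by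
  by_cases h : e ∈ EL G
  · obtain ⟨i, hi⟩ := List.mem_iff_get.mp h
    exact ⟨i, fun _ => hi⟩
  · exact ⟨⟨0, EL_pos G⟩, fun h' => absurd h' h⟩

/-- Index of an expression in `EL`. -/
noncomputable def idx (e : PExp σ G.ν) : Fin (dG G) := (idxEx G e).choose

theorem get_idx {e : PExp σ G.ν} (he : e ∈ EL G) : (EL G).get (idx G e) = e :=
  (idxEx G e).choose_spec he

variable (hG : G.Total)

/-- The (unique) result of `Rec(e, x)`. -/
noncomputable def val (e : PExp σ G.ν) (x : List σ) : Option (List σ) :=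
  (hG e x).choose

theorem val_spec (e : PExp σ G.ν) (x : List σ) : PegRec G.R e x (val G hG e x) :=
  (hG e x).choose_spec

theorem val_eq {e : PExp σ G.ν} {x : List σ} {r : Option (List σ)}
    (h : PegRec G.R e x r) : val G hG e x = r :=
  det (val_spec G hG e x) h

include hG in
theorem μex (e : PExp σ G.ν) (x : List σ) : ∃ n, (pegEval G.R n e x).isSome := by
  obtain ⟨r, hr⟩ := hG e x
  obtain ⟨n, hn⟩ := pegEval_complete hr
  exact ⟨n, by simp [hn]⟩

/-- The minimal amount of fuel needed to evaluate `e` on `x`. -/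
noncomputable def μ (e : PExp σ G.ν) (x : List σ) : ℕ := Nat.find (μex G hG e x)

theorem μ_spec (e : PExp σ G.ν) (x : List σ) :
    pegEval G.R (μ G hG e x) e x = some (val G hG e x) := by
  have h := Nat.find_spec (μex G hG e x)
  rw [Option.isSome_iff_exists] at h
  obtain ⟨r, hr⟩ := h
  rw [μ, hr, val_eq G hG (pegEval_sound hr)]

theorem μ_le {e : PExp σ G.ν} {x : List σ} {n : ℕ}
    (h : (pegEval G.R n e x).isSome) : μ G hG e x ≤ n :=
  Nat.find_min' _ h

theorem μ_pos (e : PExp σ G.ν) (x : List σ) : 0 < μ G hG e x := by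
  rcases Nat.eq_zero_or_pos (μ G hG e x) with h | h
  · have := μ_spec G hG e x
    rw [h] at this
    simp [pegEval] at this
  · exact h

theorem μ_succ (e : PExp σ G.ν) (x : List σ) :
    ∃ n, μ G hG e x = n + 1 ∧ pegEval G.R (n + 1) e x = some (val G hG e x) := by
  obtain ⟨n, hn⟩ : ∃ n, μ G hG e x = n + 1 := ⟨μ G hG e x - 1, by have := μ_pos G hG e x; omega⟩
  exact ⟨n, hn, hn ▸ μ_spec G hG e x⟩

theorem μ_nt (A : G.ν) (x : List σ) : μ G hG (G.R A) x < μ G hG (.nt A) x := by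
  obtain ⟨n, hn, hev⟩ := μ_succ G hG (.nt A) x
  rw [hn]
  have : pegEval G.R n (G.R A) x = some (val G hG (.nt A) x) := hev
  exact Nat.lt_succ_of_le (μ_le G hG (by simp [this]))

theorem μ_not (e : PExp σ G.ν) (x : List σ) : μ G hG e x < μ G hG (.notP e) x := by
  obtain ⟨n, hn, hev⟩ := μ_succ G hG (.notP e) x
  rw [hn]
  simp only [pegEval, Option.map_eq_some_iff] at hev
  obtain ⟨r, hr, -⟩ := hev
  exact Nat.lt_succ_of_le (μ_le G hG (by simp [hr]))

theorem μ_and (e : PExp σ G.ν) (x : List σ) : μ G hG e x < μ G hG (.andP e) x := by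
  obtain ⟨n, hn, hev⟩ := μ_succ G hG (.andP e) x
  rw [hn]
  simp only [pegEval, Option.map_eq_some_iff] at hev
  obtain ⟨r, hr, -⟩ := hev
  exact Nat.lt_succ_of_le (μ_le G hG (by simp [hr]))

theorem μ_seq₁ (e₁ e₂ : PExp σ G.ν) (x : List σ) :
    μ G hG e₁ x < μ G hG (.seq e₁ e₂) x := by
  obtain ⟨n, hn, hev⟩ := μ_succ G hG (.seq e₁ e₂) x
  rw [hn]
  simp only [pegEval, Option.bind_eq_some_iff] at hev
  obtain ⟨r, hr, -⟩ := hev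
  exact Nat.lt_succ_of_le (μ_le G hG (by simp [hr]))

theorem μ_choice₁ (e₁ e₂ : PExp σ G.ν) (x : List σ) :
    μ G hG e₁ x < μ G hG (.choice e₁ e₂) x := by
  obtain ⟨n, hn, hev⟩ := μ_succ G hG (.choice e₁ e₂) x
  rw [hn]
  simp only [pegEval, Option.bind_eq_some_iff] at hev
  obtain ⟨r, hr, -⟩ := hev
  exact Nat.lt_succ_of_le (μ_le G hG (by simp [hr]))

theorem μ_choice₂ {e₁ : PExp σ G.ν} (e₂ : PExp σ G.ν) {x : List σ}
    (h1 : val G hG e₁ x = none) : μ G hG e₂ x < μ G hG (.choice e₁ e₂) x := by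
  obtain ⟨n, hn, hev⟩ := μ_succ G hG (.choice e₁ e₂) x
  rw [hn]
  simp only [pegEval, Option.bind_eq_some_iff] at hev
  obtain ⟨r, hr, h₂⟩ := hev
  have : r = none := by rw [← h1]; exact (val_eq G hG (pegEval_sound hr)).symm
  subst this
  have h₂' : pegEval G.R n e₂ x = some (val G hG (.choice e₁ e₂) x) := h₂
  exact Nat.lt_succ_of_le (μ_le G hG (by simp [h₂']))

theorem μ_seq₂ {e₁ : PExp σ G.ν} (e₂ : PExp σ G.ν) {x : List σ}
    (h1 : val G hG e₁ x = some []) : μ G hG e₂ x < μ G hG (.seq e₁ e₂) x := by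
  obtain ⟨n, hn, hev⟩ := μ_succ G hG (.seq e₁ e₂) x
  rw [hn]
  simp only [pegEval, Option.bind_eq_some_iff] at hev
  obtain ⟨r, hr, h₂⟩ := hev
  have : r = some [] := by rw [← h1]; exact (val_eq G hG (pegEval_sound hr)).symm
  subst this
  have h₂ : (pegEval G.R n e₂ (x.drop ([] : List σ).length)).map
      (fun r₂ => r₂.map (([] : List σ) ++ ·)) = some (val G hG (.seq e₁ e₂) x) := h₂
  simp only [List.length_nil, List.drop_zero, Option.map_eq_some_iff] at h₂
  obtain ⟨r₂, hr₂, -⟩ := h₂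
  exact Nat.lt_succ_of_le (μ_le G hG (by simp [hr₂]))

/-! ### Equations for `val` -/

theorem val_eps (x : List σ) : val G hG .eps x = some [] := val_eq G hG (.eps x)

theorem val_fail (x : List σ) : val G hG .fail x = none := val_eq G hG (.fail x)

theorem val_term (a b : σ) (z : List σ) :
    val G hG (.term a) (b :: z) = if a = b then some [a] else none := by
  by_cases h : a = b
  · subst h; rw [if_pos rfl]; exact val_eq G hG (.termOk a z)
  · rw [if_neg h]; exact val_eq G hG (.termMismatch a b z h)

theorem val_nt (A : G.ν) (x : List σ) : val G hG (.nt A) x = val G hG (G.R A) x :=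
  val_eq G hG (.ntRule A x _ (val_spec G hG (G.R A) x))

theorem val_not_none {e : PExp σ G.ν} {x : List σ} (h : val G hG e x = none) :
    val G hG (.notP e) x = some [] :=
  val_eq G hG (.notFail e x (h ▸ val_spec G hG e x))

theorem val_not_some {e : PExp σ G.ν} {x y : List σ} (h : val G hG e x = some y) :
    val G hG (.notP e) x = none :=
  val_eq G hG (.notSucc e x y (h ▸ val_spec G hG e x))

theorem val_and_none {e : PExp σ G.ν} {x : List σ} (h : val G hG e x = none) :
    val G hG (.andP e) x = none :=
  val_eq G hG (.andFail e x (h ▸ val_spec G hG e x))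

theorem val_and_some {e : PExp σ G.ν} {x y : List σ} (h : val G hG e x = some y) :
    val G hG (.andP e) x = some [] :=
  val_eq G hG (.andSucc e x y (h ▸ val_spec G hG e x))

theorem val_choice_some {e₁ : PExp σ G.ν} (e₂ : PExp σ G.ν) {x y : List σ}
    (h : val G hG e₁ x = some y) : val G hG (.choice e₁ e₂) x = some y :=
  val_eq G hG (.choice₁ e₁ e₂ x y (h ▸ val_spec G hG e₁ x))

theorem val_choice_none {e₁ : PExp σ G.ν} (e₂ : PExp σ G.ν) {x : List σ}
    (h : val G hG e₁ x = none) : val G hG (.choice e₁ e₂) x = val G hG e₂ x :=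
  val_eq G hG (.choice₂ e₁ e₂ x _ (h ▸ val_spec G hG e₁ x) (val_spec G hG e₂ x))

theorem val_seq_none {e₁ : PExp σ G.ν} (e₂ : PExp σ G.ν) {x : List σ}
    (h : val G hG e₁ x = none) : val G hG (.seq e₁ e₂) x = none :=
  val_eq G hG (.seqFail₁ e₁ e₂ x (h ▸ val_spec G hG e₁ x))

theorem val_seq_some {e₁ : PExp σ G.ν} (e₂ : PExp σ G.ν) {y₁ z : List σ}
    (h : val G hG e₁ (y₁ ++ z) = some y₁) :
    val G hG (.seq e₁ e₂) (y₁ ++ z) = (val G hG e₂ z).map (y₁ ++ ·) := by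
  have h1 : PegRec G.R e₁ (y₁ ++ z) (some y₁) := h ▸ val_spec G hG e₁ (y₁ ++ z)
  cases h2 : val G hG e₂ z with
  | none => exact val_eq G hG (.seqFail₂ e₁ e₂ y₁ z h1 (h2 ▸ val_spec G hG e₂ z))
  | some y₂ => exact val_eq G hG (.seqOk e₁ e₂ y₁ z y₂ h1 (h2 ▸ val_spec G hG e₂ z))

/-- The consumed string is a prefix. -/
theorem val_prefix {e : PExp σ G.ν} {x y : List σ} (h : val G hG e x = some y) :
    ∃ z, x = y ++ z :=
  consumed_prefix (h ▸ val_spec G hG e x) y rfl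

end Construction

/-! ### Suffix bookkeeping -/

/-- The string associated with node `v` after the automaton has read `p`. -/
def suf (p : List σ) (v : ℕ) : List σ := (p.take v).reverse

theorem suf_zero (p : List σ) : suf p 0 = [] := rfl

theorem suf_length {p : List σ} {v : ℕ} (h : v ≤ p.length) : (suf p v).length = v := by
  simp [suf]; omega

theorem suf_append_lt {p : List σ} {v : ℕ} (a : σ) (h : v ≤ p.length) :
    suf (p ++ [a]) v = suf p v := by
  rw [suf, suf, List.take_append]
  have : v - p.length = 0 := by omega
  rw [this]
  simp

theorem suf_append_self (p : List σ) (a : σ) :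
    suf (p ++ [a]) (p.length + 1) = a :: p.reverse := by
  rw [suf, List.take_of_length_le (by simp)]
  simp

theorem suf_sub {p : List σ} {v : ℕ} {y z : List σ} (hv : v ≤ p.length)
    (hsplit : suf p v = y ++ z) : suf p (v - y.length) = z := by
  have hlen : y.length + z.length = v := by
    have := congrArg List.length hsplit
    rw [suf_length hv] at this
    simp at this
    omega
  have htake : p.take v = z.reverse ++ y.reverse := by
    have := congrArg List.reverse hsplit
    rw [suf, List.reverse_reverse] at this
    simpa using this
  have hts : p.take (v - y.length) = (p.take v).take (v - y.length) := by
    rw [List.take_take]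
    congr 1
    omega
  rw [suf, hts, htake,
    List.take_append, List.take_of_length_le (by simp; omega)]
  have : v - y.length - z.reverse.length = 0 := by simp; omega
  rw [this]
  simp

section Construction2

variable (G : PEG σ) (hG : G.Total)

/-- The success bit-vector for a given input string. -/
noncomputable def bits (s : List σ) : ΓG G := fun i => (val G hG ((EL G).get i) s).isSome

/-- The canonical scaffold built by the automaton after reading `p`. -/
noncomputable def Sc (p : List σ) : Scaffold (dG G) (ΓG G) where
  top := p.length
  edge v i :=
    if 1 ≤ v ∧ v ≤ p.length then
      (val G hG ((EL G).get i) (suf p v)).map (fun y => v - y.length)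
    else none
  label v := if 1 ≤ v ∧ v ≤ p.length then some (bits G hG (suf p v)) else none
  back := by
    intro v i w h
    split_ifs at h with hc
    rw [Option.map_eq_some_iff] at h
    obtain ⟨y, -, rfl⟩ := h
    omega

theorem Sc_top (p : List σ) : (Sc G hG p).top = p.length := rfl

theorem Sc_label_pos (p : List σ) {v : ℕ} (h1 : 1 ≤ v) (h2 : v ≤ p.length) :
    (Sc G hG p).label v = some (bits G hG (suf p v)) := by
  simp [Sc, h1, h2]

theorem Sc_label_zero (p : List σ) : (Sc G hG p).label 0 = none := by simp [Sc]

theorem Sc_edge_pos (p : List σ) {v : ℕ} (i : Fin (dG G)) (h1 : 1 ≤ v) (h2 : v ≤ p.length) :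
    (Sc G hG p).edge v i = (val G hG ((EL G).get i) (suf p v)).map (fun y => v - y.length) := by
  simp [Sc, h1, h2]

/-- The neighbourhood evaluator: computes the result of an expression at the new
position directly from the neighbourhood tree of the old top node. -/
noncomputable def evalN (a : σ) : ℕ → PExp σ G.ν → NTree (dG G) (ΓG G) → Option (EvRes (dG G))
  | 0, _, _ => none
  | _ + 1, .eps, _ => some .self
  | _ + 1, .fail, _ => some .fail
  | _ + 1, .term b, _ => some (if b = a then .targ [] else .fail)
  | n + 1, .nt A, t => evalN a n (G.R A) t
  | n + 1, .notP e, t =>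
      (evalN a n e t).map (fun r => match r with | .fail => .self | _ => .fail)
  | n + 1, .andP e, t =>
      (evalN a n e t).map (fun r => match r with | .fail => .fail | _ => .self)
  | n + 1, .choice e₁ e₂, t =>
      (evalN a n e₁ t).bind (fun r => match r with
        | .fail => evalN a n e₂ t
        | r => some r)
  | n + 1, .seq e₁ e₂, t =>
      (evalN a n e₁ t).bind (fun r => match r with
        | .fail => some .fail
        | .self => evalN a n e₂ t
        | .targ l =>
          match t.read l with
          | none => some .fail
          | some t' =>
            match t'.lab with
            | none => some (if bits G hG [] (idx G e₂) then .targ l else .fail)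
            | some γ => some (if γ (idx G e₂) then .targ (l ++ [idx G e₂]) else .fail))

/-- Counting expressions whose evaluation is at most as deep: the induction measure. -/
noncomputable def Tcard (s : List σ) (e : PExp σ G.ν) : ℕ :=
  (EL G).countP (fun e' => decide (μ G hG e' s ≤ μ G hG e s))

theorem Tcard_le (s : List σ) (e : PExp σ G.ν) : Tcard G hG s e ≤ (EL G).length :=
  List.countP_le_length

theorem Tcard_pos {s : List σ} {e : PExp σ G.ν} (he : e ∈ EL G) : 0 < Tcard G hG s e := by
  rw [Tcard, List.countP_pos_iff]
  exact ⟨e, he, by simp⟩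

theorem Tcard_lt {s : List σ} {e c : PExp σ G.ν} (he : e ∈ EL G)
    (hlt : μ G hG c s < μ G hG e s) : Tcard G hG s c < Tcard G hG s e := by
  apply countP_lt_countP _ _ _ _ e he (by simp) (by simp; omega)
  intro x hx
  simp at hx ⊢
  omega

/-- Membership of subexpressions in `EL`. -/
theorem EL_notP {e : PExp σ G.ν} (h : PExp.notP e ∈ EL G) : e ∈ EL G :=
  EL_closed G h (List.mem_cons_of_mem _ (self_mem_subs e))

theorem EL_andP {e : PExp σ G.ν} (h : PExp.andP e ∈ EL G) : e ∈ EL G :=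
  EL_closed G h (List.mem_cons_of_mem _ (self_mem_subs e))

theorem EL_seq₁ {e₁ e₂ : PExp σ G.ν} (h : PExp.seq e₁ e₂ ∈ EL G) : e₁ ∈ EL G :=
  EL_closed G h (List.mem_cons_of_mem _ (List.mem_append_left _ (self_mem_subs e₁)))

theorem EL_seq₂ {e₁ e₂ : PExp σ G.ν} (h : PExp.seq e₁ e₂ ∈ EL G) : e₂ ∈ EL G :=
  EL_closed G h (List.mem_cons_of_mem _ (List.mem_append_right _ (self_mem_subs e₂)))

theorem EL_choice₁ {e₁ e₂ : PExp σ G.ν} (h : PExp.choice e₁ e₂ ∈ EL G) : e₁ ∈ EL G :=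
  EL_closed G h (List.mem_cons_of_mem _ (List.mem_append_left _ (self_mem_subs e₁)))

theorem EL_choice₂ {e₁ e₂ : PExp σ G.ν} (h : PExp.choice e₁ e₂ ∈ EL G) : e₂ ∈ EL G :=
  EL_closed G h (List.mem_cons_of_mem _ (List.mem_append_right _ (self_mem_subs e₂)))

/-- The neighbourhood tree seen by the automaton after reading `p`. -/
noncomputable def NB (p : List σ) : NTree (dG G) (ΓG G) :=
  toT (kG G) ((Sc G hG p).nbhd (kG G) p.length)

theorem NB_read (p : List σ) {l : List (Fin (dG G))} (hl : l.length ≤ kG G) :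
    ((NB G hG p).read l).map NTree.lab
      = ((Sc G hG p).follow l p.length).map (Sc G hG p).label :=
  toT_read (Sc G hG p) l (kG G) p.length hl

/-- **Core correctness of the neighbourhood evaluator.** -/
theorem core (p : List σ) (a : σ) :
    ∀ fuel : ℕ, fuel ≤ kG G → ∀ e, e ∈ EL G → Tcard G hG (a :: p.reverse) e < fuel →
      (val G hG e (a :: p.reverse) = none →
        evalN G hG a fuel e (NB G hG p) = some .fail) ∧
      (val G hG e (a :: p.reverse) = some [] →
        evalN G hG a fuel e (NB G hG p) = some .self) ∧
      (∀ y, val G hG e (a :: p.reverse) = some y → y ≠ [] →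
        ∃ l, evalN G hG a fuel e (NB G hG p) = some (.targ l) ∧ l.length < fuel ∧
          (Sc G hG p).follow l p.length = some (p.length + 1 - y.length)) := by
  intro fuel
  induction fuel with
  | zero => intro _ e he hc; exact absurd hc (by omega)
  | succ n ih =>
    intro hfk e he hc
    have hnk : n ≤ kG G := by omega
    have IHc : ∀ c, c ∈ EL G → μ G hG c (a :: p.reverse) < μ G hG e (a :: p.reverse) →
        (val G hG c (a :: p.reverse) = none →
          evalN G hG a n c (NB G hG p) = some .fail) ∧
        (val G hG c (a :: p.reverse) = some [] →
          evalN G hG a n c (NB G hG p) = some .self) ∧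
        (∀ y, val G hG c (a :: p.reverse) = some y → y ≠ [] →
          ∃ l, evalN G hG a n c (NB G hG p) = some (.targ l) ∧ l.length < n ∧
            (Sc G hG p).follow l p.length = some (p.length + 1 - y.length)) := by
      intro c hcEL hlt
      have h1 := Tcard_lt G hG he hlt
      exact ih hnk c hcEL (by omega)
    cases e with
    | eps =>
      refine ⟨?_, ?_, ?_⟩
      · intro h; rw [val_eps] at h; cases h
      · intro _; rfl
      · intro y hy hne
        rw [val_eps] at hy
        cases hy
        exact absurd rfl hne
    | fail =>
      refine ⟨?_, ?_, ?_⟩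
      · intro _; rfl
      · intro h; rw [val_fail] at h; cases h
      · intro y hy _; rw [val_fail] at hy; cases hy
    | term b =>
      by_cases hba : b = a
      · refine ⟨?_, ?_, ?_⟩
        · intro h; rw [val_term, if_pos hba] at h; cases h
        · intro h; rw [val_term, if_pos hba] at h; cases h
        · intro y hy _
          rw [val_term, if_pos hba] at hy
          cases hy
          refine ⟨[], ?_, by simp, ?_⟩
          · show some (if b = a then EvRes.targ [] else .fail) = _
            rw [if_pos hba]
          · show some p.length = some (p.length + 1 - 1)
            norm_num
      · refine ⟨?_, ?_, ?_⟩
        · intro _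
          show some (if b = a then EvRes.targ [] else .fail) = _
          rw [if_neg hba]
        · intro h; rw [val_term, if_neg hba] at h; cases h
        · intro y hy _; rw [val_term, if_neg hba] at hy; cases hy
    | nt A =>
      have hR : G.R A ∈ EL G := R_mem_EL G A
      have hIH := IHc (G.R A) hR (μ_nt G hG A _)
      have hev : evalN G hG a (n + 1) (.nt A) (NB G hG p)
          = evalN G hG a n (G.R A) (NB G hG p) := rfl
      rw [hev]
      refine ⟨?_, ?_, ?_⟩
      · intro h; rw [val_nt] at h; exact hIH.1 h
      · intro h; rw [val_nt] at h; exact hIH.2.1 h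
      · intro y hy hne
        rw [val_nt] at hy
        obtain ⟨l, h1, h2, h3⟩ := hIH.2.2 y hy hne
        exact ⟨l, h1, by omega, h3⟩
    | notP e =>
      have heEL : e ∈ EL G := EL_notP G he
      have hIH := IHc e heEL (μ_not G hG e _)
      have hev : evalN G hG a (n + 1) (.notP e) (NB G hG p)
          = (evalN G hG a n e (NB G hG p)).map
              (fun r => match r with | .fail => .self | _ => .fail) := rfl
      rw [hev]
      refine ⟨?_, ?_, ?_⟩
      · intro h
        cases hv : val G hG e (a :: p.reverse) with
        | none => rw [val_not_none G hG hv] at h; cases h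
        | some y =>
          cases hy : y with
          | nil => rw [hy] at hv; rw [hIH.2.1 hv]; rfl
          | cons c ys =>
            obtain ⟨l, h1, -, -⟩ := hIH.2.2 y hv (by rw [hy]; simp)
            rw [h1]
            rfl
      · intro h
        cases hv : val G hG e (a :: p.reverse) with
        | none => rw [hIH.1 hv]; rfl
        | some y => rw [val_not_some G hG hv] at h; cases h
      · intro y hy hne
        cases hv : val G hG e (a :: p.reverse) with
        | none =>
          rw [val_not_none G hG hv] at hy
          cases hy
          exact absurd rfl hne
        | some y' => rw [val_not_some G hG hv] at hy; cases hy
    | andP e =>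
      have heEL : e ∈ EL G := EL_andP G he
      have hIH := IHc e heEL (μ_and G hG e _)
      have hev : evalN G hG a (n + 1) (.andP e) (NB G hG p)
          = (evalN G hG a n e (NB G hG p)).map
              (fun r => match r with | .fail => .fail | _ => .self) := rfl
      rw [hev]
      refine ⟨?_, ?_, ?_⟩
      · intro h
        cases hv : val G hG e (a :: p.reverse) with
        | none => rw [hIH.1 hv]; rfl
        | some y => rw [val_and_some G hG hv] at h; cases h
      · intro h
        cases hv : val G hG e (a :: p.reverse) with
        | none => rw [val_and_none G hG hv] at h; cases h
        | some y =>
          cases hy : y with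
          | nil => rw [hy] at hv; rw [hIH.2.1 hv]; rfl
          | cons c ys =>
            obtain ⟨l, h1, -, -⟩ := hIH.2.2 y hv (by rw [hy]; simp)
            rw [h1]
            rfl
      · intro y hy hne
        cases hv : val G hG e (a :: p.reverse) with
        | none => rw [val_and_none G hG hv] at hy; cases hy
        | some y' =>
          rw [val_and_some G hG hv] at hy
          cases hy
          exact absurd rfl hne
    | choice e₁ e₂ =>
      have h1EL : e₁ ∈ EL G := EL_choice₁ G he
      have h2EL : e₂ ∈ EL G := EL_choice₂ G he
      have hIH1 := IHc e₁ h1EL (μ_choice₁ G hG e₁ e₂ _)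
      have hev : evalN G hG a (n + 1) (.choice e₁ e₂) (NB G hG p)
          = (evalN G hG a n e₁ (NB G hG p)).bind (fun r => match r with
              | .fail => evalN G hG a n e₂ (NB G hG p)
              | r => some r) := rfl
      rw [hev]
      cases hv1 : val G hG e₁ (a :: p.reverse) with
      | some y₁ =>
        have hvc := val_choice_some G hG e₂ hv1
        cases hy₁ : y₁ with
        | nil =>
          rw [hy₁] at hv1 hvc
          rw [hIH1.2.1 hv1]
          refine ⟨?_, ?_, ?_⟩
          · intro h; rw [hvc] at h; cases h
          · intro _; rfl
          · intro y hy hne; rw [hvc] at hy; cases hy; exact absurd rfl hne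
        | cons c ys =>
          obtain ⟨l, hl1, hl2, hl3⟩ := hIH1.2.2 y₁ hv1 (by rw [hy₁]; simp)
          rw [hl1]
          refine ⟨?_, ?_, ?_⟩
          · intro h; rw [hvc] at h; cases h
          · intro h
            rw [hvc] at h
            cases h
            simp at hy₁
          · intro y hy hne
            rw [hvc] at hy
            cases hy
            exact ⟨l, rfl, by omega, hl3⟩
      | none =>
        have hvc := val_choice_none G hG e₂ hv1
        have hIH2 := IHc e₂ h2EL (μ_choice₂ G hG e₂ hv1)
        rw [hIH1.1 hv1]
        show _ ∧ _ ∧ _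
        rw [hvc]
        refine ⟨?_, ?_, ?_⟩
        · intro h; exact hIH2.1 h
        · intro h; exact hIH2.2.1 h
        · intro y hy hne
          obtain ⟨l, hl1, hl2, hl3⟩ := hIH2.2.2 y hy hne
          exact ⟨l, hl1, by omega, hl3⟩
    | seq e₁ e₂ =>
      have h1EL : e₁ ∈ EL G := EL_seq₁ G he
      have h2EL : e₂ ∈ EL G := EL_seq₂ G he
      have hIH1 := IHc e₁ h1EL (μ_seq₁ G hG e₁ e₂ _)
      have hev : evalN G hG a (n + 1) (.seq e₁ e₂) (NB G hG p)
          = (evalN G hG a n e₁ (NB G hG p)).bind (fun r => match r with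
              | .fail => some .fail
              | .self => evalN G hG a n e₂ (NB G hG p)
              | .targ l =>
                match (NB G hG p).read l with
                | none => some .fail
                | some t' =>
                  match t'.lab with
                  | none => some (if bits G hG [] (idx G e₂) then .targ l else .fail)
                  | some γ =>
                    some (if γ (idx G e₂) then .targ (l ++ [idx G e₂]) else .fail)) := rfl
      rw [hev]
      cases hv1 : val G hG e₁ (a :: p.reverse) with
      | none =>
        have hvs := val_seq_none G hG e₂ hv1
        rw [hIH1.1 hv1]
        refine ⟨fun _ => rfl, ?_, ?_⟩
        · intro h; rw [hvs] at h; cases h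
        · intro y hy _; rw [hvs] at hy; cases hy
      | some y₁ =>
        obtain ⟨zs, hzs⟩ := val_prefix G hG hv1
        have hvs : val G hG (.seq e₁ e₂) (a :: p.reverse) = (val G hG e₂ zs).map (y₁ ++ ·) := by
          rw [hzs] at hv1 ⊢
          exact val_seq_some G hG e₂ hv1
        cases hy₁ : y₁ with
        | nil =>
          rw [hy₁] at hv1 hvs hzs
          rw [hIH1.2.1 hv1]
          rw [List.nil_append] at hzs
          subst hzs
          have hvs : val G hG (.seq e₁ e₂) (a :: p.reverse) = val G hG e₂ (a :: p.reverse) := by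
            rw [hvs]
            simp
          rw [hvs]
          have hIH2 := IHc e₂ h2EL (μ_seq₂ G hG e₂ hv1)
          refine ⟨hIH2.1, hIH2.2.1, ?_⟩
          intro y hy hne
          obtain ⟨l, hl1, hl2, hl3⟩ := hIH2.2.2 y hy hne
          exact ⟨l, hl1, by omega, hl3⟩
        | cons c ys =>
          have hy₁ne : y₁ ≠ [] := by rw [hy₁]; simp
          obtain ⟨l, hl1, hl2, hl3⟩ := hIH1.2.2 y₁ hv1 hy₁ne
          rw [hl1]
          -- basic length facts
          have hlen : y₁.length + zs.length = p.length + 1 := by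
            have := congrArg List.length hzs
            simp at this
            omega
          have hy₁pos : 1 ≤ y₁.length := by
            cases y₁ with
            | nil => exact absurd rfl hy₁ne
            | cons _ _ => simp
          set z : ℕ := p.length + 1 - y₁.length with hz
          have hzlen : zs.length = z := by omega
          have hzle : z ≤ p.length := by omega
          -- the z-node string is `zs`
          have hsuf : suf p z = zs := by
            have hfull : suf (p ++ [a]) (p.length + 1) = y₁ ++ zs := by
              rw [suf_append_self]; exact hzs
            have := suf_sub (p := p ++ [a]) (by simp) hfull
            rwa [show p.length + 1 - y₁.length = z from rfl,
              suf_append_lt a hzle] at this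
          -- reading the label of the z-node
          have hread := NB_read G hG p (l := l) (le_trans (le_of_lt hl2) hnk)
          rw [hl3] at hread
          simp only [Option.map_some, Option.map_eq_some_iff] at hread
          obtain ⟨t', ht'1, ht'2⟩ := hread
          by_cases hz0 : z = 0
          · -- the remaining suffix is empty
            have hzs0 : zs = [] := by
              have : zs.length = 0 := by omega
              exact List.length_eq_zero_iff.mp this
            rw [hz0, Sc_label_zero] at ht'2
            simp only [Option.bind_some, ht'1, ht'2]
            have hbits : bits G hG [] (idx G e₂) = (val G hG e₂ []).isSome := by
              rw [bits, get_idx G h2EL]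
            cases hv2 : val G hG e₂ [] with
            | none =>
              rw [hzs0, hv2] at hvs
              simp only [Option.map_none] at hvs
              refine ⟨fun _ => ?_, ?_, ?_⟩
              · rw [hbits, hv2]; rfl
              · intro h; rw [hvs] at h; cases h
              · intro y hy _; rw [hvs] at hy; cases hy
            | some y₂ =>
              have hy₂ : y₂ = [] := by
                obtain ⟨w, hw⟩ := val_prefix G hG hv2
                cases y₂ with
                | nil => rfl
                | cons _ _ => simp at hw
              rw [hy₂] at hv2
              rw [hzs0, hv2] at hvs
              simp only [Option.map_some, List.append_nil] at hvs
              refine ⟨?_, ?_, ?_⟩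
              · intro h; rw [hvs] at h; cases h
              · intro h
                rw [hvs] at h
                cases h
                exact absurd rfl hy₁ne
              · intro y hy _
                rw [hvs] at hy
                cases hy
                refine ⟨l, ?_, by omega, ?_⟩
                · rw [hbits, hv2]; rfl
                · exact hl3
          · -- the remaining suffix is non-empty: read the stored bit of `e₂`
            have hz1 : 1 ≤ z := by omega
            rw [Sc_label_pos G hG p hz1 hzle] at ht'2
            simp only [Option.bind_some, ht'1, ht'2]
            have hbits : bits G hG (suf p z) (idx G e₂) = (val G hG e₂ zs).isSome := by
              rw [bits, get_idx G h2EL, hsuf]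
            cases hv2 : val G hG e₂ zs with
            | none =>
              rw [hv2] at hvs
              simp only [Option.map_none] at hvs
              refine ⟨fun _ => ?_, ?_, ?_⟩
              · rw [hbits, hv2]; rfl
              · intro h; rw [hvs] at h; cases h
              · intro y hy _; rw [hvs] at hy; cases hy
            | some y₂ =>
              rw [hv2] at hvs
              simp only [Option.map_some] at hvs
              have hy₂len : y₂.length ≤ z := by
                obtain ⟨w, hw⟩ := val_prefix G hG hv2
                have := congrArg List.length hw
                simp at this
                omega
              refine ⟨?_, ?_, ?_⟩
              · intro h; rw [hvs] at h; cases h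
              · intro h
                rw [hvs] at h
                simp only [Option.some.injEq, List.append_eq_nil_iff] at h
                exact absurd h.1 hy₁ne
              · intro y hy _
                rw [hvs] at hy
                cases hy
                refine ⟨l ++ [idx G e₂], ?_, by simp; omega, ?_⟩
                · rw [hbits, hv2]; rfl
                · rw [follow_append, hl3]
                  simp only [Option.bind_some]
                  rw [Sc_edge_pos G hG p (idx G e₂) hz1 hzle, get_idx G h2EL, hsuf, hv2]
                  simp only [Option.map_some]
                  congr 1
                  simp
                  omega

/-! ### The scaffolding automaton -/

/-- The transition function of the automaton. -/
noncomputable def trans (q : Bool) (a : σ) (nb : Nbhd (dG G) (ΓG G) (kG G)) :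
    Bool × ΓG G × (Fin (dG G) → PathSpec (dG G) (kG G)) :=
  ((match evalN G hG a (kG G) (G.R G.S) (toT (kG G) nb) with
    | some (.targ l) =>
      match (toT (kG G) nb).read l with
      | some t' => t'.lab.isNone
      | none => false
    | _ => false),
   (fun i => match evalN G hG a (kG G) ((EL G).get i) (toT (kG G) nb) with
    | some .fail => false
    | some _ => true
    | none => false),
   (fun i => match evalN G hG a (kG G) ((EL G).get i) (toT (kG G) nb) with
    | some .self => .self
    | some (.targ l) => if h : l.length ≤ kG G then .path l h else .missing
    | _ => .missing))

/-- The scaffolding automaton associated with a total PEG. -/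
noncomputable def AG : SAutomaton σ where
  d := dG G
  dpos := EL_pos G
  Γ := ΓG G
  finΓ := inferInstance
  k := kG G
  Q := Bool
  finQ := inferInstance
  q0 := decide (val G hG (G.R G.S) [] = some [])
  F := {b | b = true}
  δ := trans G hG

theorem Scaffold_ext {d : ℕ} {Γ : Type} {S₁ S₂ : Scaffold d Γ} (h1 : S₁.top = S₂.top)
    (h2 : S₁.edge = S₂.edge) (h3 : S₁.label = S₂.label) : S₁ = S₂ := by
  cases S₁
  cases S₂
  cases h1
  cases h2
  cases h3
  rfl

theorem Sc_edge_out (p : List σ) (i : Fin (dG G)) {v : ℕ} (h : ¬(1 ≤ v ∧ v ≤ p.length)) :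
    (Sc G hG p).edge v i = none := by
  show (if 1 ≤ v ∧ v ≤ p.length then _ else none) = none
  rw [if_neg h]

theorem Sc_label_out (p : List σ) {v : ℕ} (h : ¬(1 ≤ v ∧ v ≤ p.length)) :
    (Sc G hG p).label v = none := by
  show (if 1 ≤ v ∧ v ≤ p.length then _ else none) = none
  rw [if_neg h]

theorem Sc_nil : Sc G hG [] = Scaffold.init (dG G) (ΓG G) := by
  refine Scaffold_ext rfl ?_ ?_
  · funext v i
    rw [Sc_edge_out G hG [] i (by simp; omega)]
    rfl
  · funext v
    rw [Sc_label_out G hG [] (by simp; omega)]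
    rfl

/-- The step of the automaton maps canonical configurations to canonical configurations. -/
theorem step_Sc (p : List σ) (a : σ) (q : Bool) :
    (AG G hG).step a (q, Sc G hG p)
      = (decide (val G hG (G.R G.S) (a :: p.reverse) = some (a :: p.reverse)),
          Sc G hG (p ++ [a])) := by
  have hkg : kG G = (EL G).length + 1 := rfl
  have hfuel : ∀ e, e ∈ EL G → Tcard G hG (a :: p.reverse) e < kG G := by
    intro e he
    have := Tcard_le G hG (a :: p.reverse) e
    omega
  have hcore : ∀ e, e ∈ EL G →
      (val G hG e (a :: p.reverse) = none →
        evalN G hG a (kG G) e (NB G hG p) = some .fail) ∧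
      (val G hG e (a :: p.reverse) = some [] →
        evalN G hG a (kG G) e (NB G hG p) = some .self) ∧
      (∀ y, val G hG e (a :: p.reverse) = some y → y ≠ [] →
        ∃ l, evalN G hG a (kG G) e (NB G hG p) = some (.targ l) ∧ l.length < kG G ∧
          (Sc G hG p).follow l p.length = some (p.length + 1 - y.length)) :=
    fun e he => core G hG p a (kG G) le_rfl e he (hfuel e he)
  have hnb : toT (kG G) ((Sc G hG p).nbhd (kG G) (Sc G hG p).top) = NB G hG p := rfl
  have hstep : (AG G hG).step a (q, Sc G hG p)
      = ((trans G hG q a ((Sc G hG p).nbhd (kG G) (Sc G hG p).top)).1,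
         (Sc G hG p).extend (trans G hG q a ((Sc G hG p).nbhd (kG G) (Sc G hG p).top)).2.1
           (trans G hG q a ((Sc G hG p).nbhd (kG G) (Sc G hG p).top)).2.2) := rfl
  rw [hstep]
  have hps : ∀ i, (trans G hG q a ((Sc G hG p).nbhd (kG G) (Sc G hG p).top)).2.2 i
      = (match evalN G hG a (kG G) ((EL G).get i) (NB G hG p) with
        | some .self => PathSpec.self
        | some (.targ l) => if h : l.length ≤ kG G then .path l h else .missing
        | _ => .missing) := fun _ => rfl
  have hlb : ∀ i, (trans G hG q a ((Sc G hG p).nbhd (kG G) (Sc G hG p).top)).2.1 i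
      = (match evalN G hG a (kG G) ((EL G).get i) (NB G hG p) with
        | some .fail => false
        | some _ => true
        | none => false) := fun _ => rfl
  have hmem : ∀ i : Fin (dG G), (EL G).get i ∈ EL G := fun i => List.get_mem (EL G) i
  refine Prod.ext ?_ ?_
  · -- the new state
    show (trans G hG q a ((Sc G hG p).nbhd (kG G) (Sc G hG p).top)).1 = _
    cases hv : val G hG (G.R G.S) (a :: p.reverse) with
    | none =>
      have hev := (hcore _ (R_mem_EL G G.S)).1 hv
      simp only [trans, hnb, hev, hv]
      simp
    | some y =>
      by_cases hynil : y = []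
      · subst hynil
        have hev := (hcore _ (R_mem_EL G G.S)).2.1 hv
        simp only [trans, hnb, hev, hv]
        simp
      · obtain ⟨l, hl1, hl2, hl3⟩ := (hcore _ (R_mem_EL G G.S)).2.2 _ hv hynil
        obtain ⟨w, hw⟩ := val_prefix G hG hv
        have hylen : y.length + w.length = p.length + 1 := by
          have := congrArg List.length hw
          simp at this
          omega
        have hread := NB_read G hG p (l := l) (le_of_lt hl2)
        rw [hl3] at hread
        simp only [Option.map_some, Option.map_eq_some_iff] at hread
        obtain ⟨t', ht'1, ht'2⟩ := hread
        simp only [trans, hnb, hl1, ht'1, hv]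
        by_cases hfull : y.length = p.length + 1
        · -- the whole input is consumed: accept
          have hw0 : w = [] := by
            have : w.length = 0 := by omega
            exact List.length_eq_zero_iff.mp this
          have hys : y = a :: p.reverse := by rw [hw, hw0, List.append_nil]
          rw [hfull] at ht'2
          simp only [Nat.sub_self] at ht'2
          rw [Sc_label_zero] at ht'2
          rw [ht'2]
          simp [hys]
        · -- proper prefix: reject
          have hypos : 1 ≤ y.length := by
            cases y with
            | nil => exact absurd rfl hynil
            | cons _ _ => simp
          have hzpos : 1 ≤ p.length + 1 - y.length := by omega
          have hzle : p.length + 1 - y.length ≤ p.length := by omega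
          rw [Sc_label_pos G hG p hzpos hzle] at ht'2
          rw [ht'2]
          have hne : y ≠ a :: p.reverse := by
            intro hcc
            apply hfull
            rw [hcc]
            simp
          simp [hne]
  · -- the new scaffold
    refine Scaffold_ext ?_ ?_ ?_
    · show p.length + 1 = (p ++ [a]).length
      simp
    · funext v i
      show (if v = p.length + 1 then _ else if v ≤ p.length then (Sc G hG p).edge v i else none)
        = (Sc G hG (p ++ [a])).edge v i
      by_cases hv1 : v = p.length + 1
      · rw [if_pos hv1, hv1]
        have hRHS : (Sc G hG (p ++ [a])).edge (p.length + 1) i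
            = (val G hG ((EL G).get i) (a :: p.reverse)).map
                (fun y => p.length + 1 - y.length) := by
          rw [show (Sc G hG (p ++ [a])).edge (p.length + 1) i
              = (Sc G hG (p ++ [a])).edge ((p ++ [a]).length) i by simp]
          rw [Sc_edge_pos G hG (p ++ [a]) i (by simp) (by simp)]
          rw [show suf (p ++ [a]) (p ++ [a]).length = a :: p.reverse by
            rw [show ((p ++ [a]).length) = p.length + 1 by simp, suf_append_self]]
          simp
        rw [hRHS]
        cases hvi : val G hG ((EL G).get i) (a :: p.reverse) with
        | none =>
          have hev := (hcore _ (hmem i)).1 hvi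
          rw [hps i, hev]
          rfl
        | some y =>
          by_cases hynil : y = []
          · subst hynil
            have hev := (hcore _ (hmem i)).2.1 hvi
            rw [hps i, hev]
            rfl
          · obtain ⟨l, hl1, hl2, hl3⟩ := (hcore _ (hmem i)).2.2 _ hvi hynil
            simp only [hps, hl1, dif_pos (le_of_lt hl2), Option.map_some]
            exact hl3
      · rw [if_neg hv1]
        by_cases hv2 : v ≤ p.length
        · rw [if_pos hv2]
          by_cases hv3 : 1 ≤ v
          · rw [Sc_edge_pos G hG p i hv3 hv2, Sc_edge_pos G hG (p ++ [a]) i hv3 (by simp; omega),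
              suf_append_lt a hv2]
          · have hv0 : v = 0 := by omega
            subst hv0
            rw [Sc_edge_out G hG p i (by omega), Sc_edge_out G hG (p ++ [a]) i (by omega)]
        · rw [if_neg hv2]
          rw [Sc_edge_out G hG (p ++ [a]) i (by simp; omega)]
    · funext v
      show (if v = p.length + 1 then some _ else if v ≤ p.length then (Sc G hG p).label v else none)
        = (Sc G hG (p ++ [a])).label v
      by_cases hv1 : v = p.length + 1
      · rw [if_pos hv1, hv1]
        have hRHS : (Sc G hG (p ++ [a])).label (p.length + 1)
            = some (bits G hG (a :: p.reverse)) := by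
          rw [show (Sc G hG (p ++ [a])).label (p.length + 1)
              = (Sc G hG (p ++ [a])).label ((p ++ [a]).length) by simp]
          rw [Sc_label_pos G hG (p ++ [a]) (by simp) (by simp)]
          rw [show suf (p ++ [a]) (p ++ [a]).length = a :: p.reverse by
            rw [show ((p ++ [a]).length) = p.length + 1 by simp, suf_append_self]]
        rw [hRHS]
        congr 1
        funext i
        rw [hlb i, bits]
        cases hvi : val G hG ((EL G).get i) (a :: p.reverse) with
        | none =>
          have hev := (hcore _ (hmem i)).1 hvi
          rw [hev]
          rfl
        | some y =>
          by_cases hynil : y = []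
          · subst hynil
            have hev := (hcore _ (hmem i)).2.1 hvi
            rw [hev]
            rfl
          · obtain ⟨l, hl1, -, -⟩ := (hcore _ (hmem i)).2.2 _ hvi hynil
            rw [hl1]
            rfl
      · rw [if_neg hv1]
        by_cases hv2 : v ≤ p.length
        · rw [if_pos hv2]
          by_cases hv3 : 1 ≤ v
          · rw [Sc_label_pos G hG p hv3 hv2, Sc_label_pos G hG (p ++ [a]) hv3 (by simp; omega),
              suf_append_lt a hv2]
          · have hv0 : v = 0 := by omega
            subst hv0
            rw [Sc_label_out G hG p (by omega), Sc_label_out G hG (p ++ [a]) (by omega)]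
        · rw [if_neg hv2]
          rw [Sc_label_out G hG (p ++ [a]) (by simp; omega)]

/-- The run of the automaton on `x` computes the canonical configuration. -/
theorem run_eq (x : List σ) :
    (AG G hG).run x
      = (decide (val G hG (G.R G.S) x.reverse = some x.reverse), Sc G hG x) := by
  induction x using List.reverseRecOn with
  | nil =>
    show ((AG G hG).q0, Scaffold.init _ _) = _
    rw [Sc_nil]
    rfl
  | append_singleton p a ih =>
    show List.foldl _ _ (p ++ [a]) = _
    rw [List.foldl_append]
    have : List.foldl (fun c b => (AG G hG).step b c) ((AG G hG).q0, Scaffold.init _ _) p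
        = (AG G hG).run p := rfl
    rw [this, ih]
    show (AG G hG).step a _ = _
    refine (step_Sc G hG p a _).trans ?_
    simp
    rfl

/-- The language decided by the automaton. -/
theorem AG_lang : (AG G hG).Lang = { x : List σ | x.reverse ∈ G.Lang } := by
  ext x
  show ((AG G hG).run x).1 ∈ (AG G hG).F ↔ _
  rw [run_eq]
  show decide (val G hG (G.R G.S) x.reverse = some x.reverse) = true ↔ _
  rw [decide_eq_true_iff]
  constructor
  · intro h
    exact PegRec.ntRule G.S x.reverse _ (h ▸ val_spec G hG (G.R G.S) x.reverse)
  · intro h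
    cases h with
    | ntRule _ _ _ h' => exact val_eq G hG h'

end Construction2

end PegScaf

/-- For every total PEG `G` over a finite alphabet `Σ` there is a
scaffolding automaton deciding exactly the reversal of the language recognised
by `G`. -/
theorem peg_to_scaffolding (σ : Type) [Fintype σ] (G : PEG σ) (hG : G.Total) :
    ∃ A : SAutomaton σ, A.Lang = { x : List σ | x.reverse ∈ G.Lang } := by
  letI : DecidableEq σ := Classical.decEq σ
  exact ⟨PegScaf.AG G hG, PegScaf.AG_lang G hG⟩
end

section
/- For every scaffolding automaton A with input alphabet Σ there exists a total parsing expression grammar G over Σ recognising exactly the reversal of the language decided by A, i.e. L(G) = { xʳ : x ∈ L(A) }. -/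
/-! ## Generic lemmas about PEG semantics -/

namespace PegAux

variable {α ν : Type} {R : ν → PExp α ν}

theorem prefix_ex {e : PExp α ν} {x : List α} {r : Option (List α)}
    (h : PegRec R e x r) : ∀ y, r = some y → ∃ z, x = y ++ z := by
  induction h with
  | eps x => exact fun y hy => ⟨x, by simp_all⟩
  | fail x => simp
  | termOk a z => exact fun y hy => ⟨z, by cases hy; rfl⟩
  | termMismatch a b z h => simp
  | termNil a => simp
  | notFail e x _ _ => exact fun y hy => ⟨x, by simp_all⟩
  | notSucc e x y _ _ => simp
  | andSucc e x y _ _ => exact fun y hy => ⟨x, by simp_all⟩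
  | andFail e x _ _ => simp
  | seqOk e₁ e₂ y₁ z y₂ h1 h2 ih1 ih2 =>
      intro y hy
      obtain ⟨z', hz'⟩ := ih2 y₂ rfl
      cases hy
      exact ⟨z', by rw [hz', List.append_assoc]⟩
  | seqFail₁ e₁ e₂ x _ _ => simp
  | seqFail₂ e₁ e₂ y₁ z _ _ _ _ => simp
  | choice₁ e₁ e₂ x y _ ih => exact ih
  | choice₂ e₁ e₂ x r _ _ _ ih => exact ih
  | ntRule A x r _ ih => exact ih

theorem det {e : PExp α ν} {x : List α} {r₁ : Option (List α)}
    (h : PegRec R e x r₁) : ∀ r₂, PegRec R e x r₂ → r₁ = r₂ := by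
  induction h with
  | eps x => intro r₂ h₂; cases h₂; rfl
  | fail x => intro r₂ h₂; cases h₂; rfl
  | termOk a z => intro r₂ h₂; cases h₂ with
    | termOk => rfl
    | termMismatch _ _ _ h => exact absurd rfl h
  | termMismatch a b z h => intro r₂ h₂; cases h₂ with
    | termOk => exact absurd rfl h
    | termMismatch => rfl
  | termNil a => intro r₂ h₂; cases h₂; rfl
  | notFail e x h ih => intro r₂ h₂; cases h₂ with
    | notFail => rfl
    | notSucc _ _ y h' => exact absurd (ih _ h') (by simp)
  | notSucc e x y h ih => intro r₂ h₂; cases h₂ with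
    | notFail _ _ h' => exact absurd (ih _ h') (by simp)
    | notSucc => rfl
  | andSucc e x y h ih => intro r₂ h₂; cases h₂ with
    | andSucc => rfl
    | andFail _ _ h' => exact absurd (ih _ h') (by simp)
  | andFail e x h ih => intro r₂ h₂; cases h₂ with
    | andSucc _ _ y h' => exact absurd (ih _ h') (by simp)
    | andFail => rfl
  | seqOk e₁ e₂ y₁ z y₂ h1 h2 ih1 ih2 =>
      intro r₂ h₂
      generalize hx : y₁ ++ z = x at *
      cases h₂ with
      | seqOk _ _ y₁' z' y₂' h1' h2' =>
          have hy : y₁ = y₁' := by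
            have := ih1 _ h1'; injection this
          subst hy
          have hz : z = z' := List.append_cancel_left hx
          subst hz
          have := ih2 _ h2'
          simp_all
      | seqFail₁ _ _ _ h1' => exact absurd (ih1 _ h1') (by simp)
      | seqFail₂ _ _ y₁' z' h1' h2' =>
          have hy : y₁ = y₁' := by
            have := ih1 _ h1'; injection this
          subst hy
          have hz : z = z' := List.append_cancel_left hx
          subst hz
          exact absurd (ih2 _ h2') (by simp)
  | seqFail₁ e₁ e₂ x h ih =>
      intro r₂ h₂
      cases h₂ with
      | seqOk _ _ y₁' z' y₂' h1' h2' => exact absurd (ih _ h1') (by simp)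
      | seqFail₁ => rfl
      | seqFail₂ _ _ y₁' z' h1' h2' => exact absurd (ih _ h1') (by simp)
  | seqFail₂ e₁ e₂ y₁ z h1 h2 ih1 ih2 =>
      intro r₂ h₂
      generalize hx : y₁ ++ z = x at *
      cases h₂ with
      | seqOk _ _ y₁' z' y₂' h1' h2' =>
          have hy : y₁ = y₁' := by
            have := ih1 _ h1'; injection this
          subst hy
          have hz : z = z' := List.append_cancel_left hx
          subst hz
          exact absurd (ih2 _ h2').symm (by simp)
      | seqFail₁ _ _ _ h1' => exact absurd (ih1 _ h1') (by simp)
      | seqFail₂ _ _ y₁' z' h1' h2' => rfl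
  | choice₁ e₁ e₂ x y h ih =>
      intro r₂ h₂
      cases h₂ with
      | choice₁ _ _ _ _ h' => exact ih _ h'
      | choice₂ _ _ _ _ h' => exact absurd (ih _ h') (by simp)
  | choice₂ e₁ e₂ x r h1 h2 ih1 ih2 =>
      intro r₂ h₂
      cases h₂ with
      | choice₁ _ _ _ _ h' => exact absurd (ih1 _ h') (by simp)
      | choice₂ _ _ _ _ _ h' => exact ih2 _ h'
  | ntRule A x r h ih =>
      intro r₂ h₂
      cases h₂ with
      | ntRule _ _ _ h' => exact ih _ h'

/-- A syntactic criterion guaranteeing that an expression never succeeds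
consuming the empty string. -/
def SCons : PExp α ν → Prop
  | .eps => False
  | .fail => True
  | .term _ => True
  | .nt _ => False
  | .notP _ => False
  | .andP _ => False
  | .seq e₁ e₂ => SCons e₁ ∨ SCons e₂
  | .choice e₁ e₂ => SCons e₁ ∧ SCons e₂

theorem scons_sound {e : PExp α ν} {x : List α} {r : Option (List α)}
    (h : PegRec R e x r) : SCons e → ∀ y, r = some y → y ≠ [] := by
  induction h with
  | seqOk e₁ e₂ y₁ z y₂ h1 h2 ih1 ih2 =>
      intro hs y hy
      injection hy with hy; subst hy
      rcases hs with hs | hs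
      · have := ih1 hs y₁ rfl; simp_all
      · have := ih2 hs y₂ rfl; simp_all
  | choice₁ e₁ e₂ x y h ih => intro hs y hy; exact ih hs.1 y hy
  | choice₂ e₁ e₂ x r h1 h2 ih1 ih2 => intro hs y hy; exact ih2 hs.2 y hy
  | termOk a z => intro _ y hy; injection hy with hy; subst hy; simp
  | eps x => exact fun hs => hs.elim
  | fail x => exact fun _ y hy => nomatch hy
  | termMismatch a b z h => exact fun _ y hy => nomatch hy
  | termNil a => exact fun _ y hy => nomatch hy
  | notFail e x _ _ => exact fun hs => hs.elim
  | notSucc e x y _ _ => exact fun _ y hy => nomatch hy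
  | andSucc e x y _ _ => exact fun hs => hs.elim
  | andFail e x _ _ => exact fun _ y hy => nomatch hy
  | seqFail₁ e₁ e₂ x _ _ => exact fun _ y hy => nomatch hy
  | seqFail₂ e₁ e₂ y₁ z _ _ _ _ => exact fun _ y hy => nomatch hy
  | ntRule A x r _ _ => exact fun hs => hs.elim

/-- Groundedness of an expression at rank `r`: every non-terminal that can be
reached without first consuming a character has rank `< r`. -/
def Grounded (rank : ν → ℕ) : ℕ → PExp α ν → Prop
  | r, .nt B => rank B < r
  | r, .notP e => Grounded rank r e
  | r, .andP e => Grounded rank r e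
  | r, .seq e₁ e₂ => Grounded rank r e₁ ∧ (Grounded rank r e₂ ∨ SCons e₁)
  | r, .choice e₁ e₂ => Grounded rank r e₁ ∧ Grounded rank r e₂
  | _, _ => True

def bound (rank : ν → ℕ) : PExp α ν → ℕ
  | .nt B => rank B + 1
  | .notP e => bound rank e
  | .andP e => bound rank e
  | .seq e₁ e₂ => max (bound rank e₁) (bound rank e₂)
  | .choice e₁ e₂ => max (bound rank e₁) (bound rank e₂)
  | _ => 0

theorem grounded_mono (rank : ν → ℕ) {r r' : ℕ} (hr : r ≤ r') :
    ∀ {e : PExp α ν}, Grounded rank r e → Grounded rank r' e := by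
  intro e
  induction e with
  | nt B => intro h; exact lt_of_lt_of_le h hr
  | notP e ih => exact ih
  | andP e ih => exact ih
  | seq e₁ e₂ ih1 ih2 =>
      intro h
      exact ⟨ih1 h.1, h.2.imp ih2 id⟩
  | choice e₁ e₂ ih1 ih2 => intro h; exact ⟨ih1 h.1, ih2 h.2⟩
  | _ => intro h; trivial

theorem grounded_bound (rank : ν → ℕ) : ∀ (e : PExp α ν), Grounded rank (bound rank e) e := by
  intro e
  induction e with
  | nt B => simp [Grounded, bound]
  | notP e ih => exact ih
  | andP e ih => exact ih
  | seq e₁ e₂ ih1 ih2 =>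
      exact ⟨grounded_mono rank (le_max_left _ _) ih1,
        Or.inl (grounded_mono rank (le_max_right _ _) ih2)⟩
  | choice e₁ e₂ ih1 ih2 =>
      exact ⟨grounded_mono rank (le_max_left _ _) ih1,
        grounded_mono rank (le_max_right _ _) ih2⟩
  | _ => trivial

theorem total_of_grounded (rank : ν → ℕ)
    (Ok : ∀ B, Grounded rank (rank B) (R B)) :
    ∀ (e : PExp α ν) (x : List α), ∃ r, PegRec R e x r := by
  classical
  have key : ∀ n : ℕ, ∀ x : List α, x.length = n →
      ∀ r : ℕ, ∀ e : PExp α ν, Grounded rank r e → ∃ s, PegRec R e x s := by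
    intro n
    induction n using Nat.strong_induction_on with
    | _ n ihn =>
      intro x hx r
      induction r using Nat.strong_induction_on with
      | _ r ihr =>
        intro e
        induction e with
        | eps => exact fun _ => ⟨some [], .eps x⟩
        | fail => exact fun _ => ⟨none, .fail x⟩
        | term a =>
            intro _
            match x with
            | [] => exact ⟨none, .termNil a⟩
            | b :: t =>
                by_cases hab : a = b
                · subst hab; exact ⟨some [a], .termOk a t⟩
                · exact ⟨none, .termMismatch a b t hab⟩
        | nt B =>
            intro hg
            obtain ⟨s, hs⟩ := ihr (rank B) hg (R B) (Ok B)
            exact ⟨s, .ntRule B x s hs⟩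
        | notP e ih =>
            intro hg
            obtain ⟨s, hs⟩ := ih hg
            match s, hs with
            | none, hs => exact ⟨some [], .notFail e x hs⟩
            | some y, hs => exact ⟨none, .notSucc e x y hs⟩
        | andP e ih =>
            intro hg
            obtain ⟨s, hs⟩ := ih hg
            match s, hs with
            | none, hs => exact ⟨none, .andFail e x hs⟩
            | some y, hs => exact ⟨some [], .andSucc e x y hs⟩
        | seq e₁ e₂ ih1 ih2 =>
            intro hg
            obtain ⟨s₁, hs₁⟩ := ih1 hg.1
            match s₁, hs₁ with
            | none, hs₁ => exact ⟨none, .seqFail₁ e₁ e₂ x hs₁⟩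
            | some y₁, hs₁ =>
                obtain ⟨z, hz⟩ := prefix_ex hs₁ y₁ rfl
                by_cases hy₁ : y₁ = []
                · subst hy₁
                  simp only [List.nil_append] at hz
                  subst hz
                  have hg₂ : Grounded rank r e₂ := by
                    rcases hg.2 with h | h
                    · exact h
                    · exact absurd rfl (scons_sound hs₁ h [] rfl)
                  obtain ⟨s₂, hs₂⟩ := ih2 hg₂
                  match s₂, hs₂ with
                  | none, hs₂ =>
                      exact ⟨none, by
                        have := PegRec.seqFail₂ (R := R) e₁ e₂ [] x hs₁ hs₂
                        simpa using this⟩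
                  | some y₂, hs₂ =>
                      exact ⟨some y₂, by
                        have := PegRec.seqOk (R := R) e₁ e₂ [] x y₂ hs₁ hs₂
                        simpa using this⟩
                · have hzlen : z.length < n := by
                    subst hz
                    simp only [List.length_append] at hx
                    have : 0 < y₁.length := List.length_pos_iff.mpr hy₁
                    omega
                  obtain ⟨s₂, hs₂⟩ := ihn z.length hzlen z rfl (bound rank e₂) e₂
                    (grounded_bound rank e₂)
                  subst hz
                  match s₂, hs₂ with
                  | none, hs₂ => exact ⟨none, .seqFail₂ e₁ e₂ y₁ z hs₁ hs₂⟩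
                  | some y₂, hs₂ => exact ⟨some (y₁ ++ y₂), .seqOk e₁ e₂ y₁ z y₂ hs₁ hs₂⟩
        | choice e₁ e₂ ih1 ih2 =>
            intro hg
            obtain ⟨s₁, hs₁⟩ := ih1 hg.1
            match s₁, hs₁ with
            | some y, hs₁ => exact ⟨some y, .choice₁ e₁ e₂ x y hs₁⟩
            | none, hs₁ =>
                obtain ⟨s₂, hs₂⟩ := ih2 hg.2
                exact ⟨s₂, .choice₂ e₁ e₂ x s₂ hs₁ hs₂⟩
  intro e x
  exact key x.length x rfl (bound rank e) e (grounded_bound rank e)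

end PegAux
/-! ## Combinators -/

namespace PegAux

variable {α ν : Type} {R : ν → PExp α ν}

open Classical in
/-- Guarded expression: `e` if the condition holds, `FAIL` otherwise. -/
noncomputable def gif (c : Prop) (e : PExp α ν) : PExp α ν :=
  if c then e else .fail

theorem gif_pos {c : Prop} {e : PExp α ν} (h : c) : gif c e = e := by
  simp [gif, h]

theorem gif_neg {c : Prop} {e : PExp α ν} (h : ¬c) : gif c e = .fail := by
  simp [gif, h]

def bigchoice : List (PExp α ν) → PExp α ν
  | [] => .fail
  | e :: L => .choice e (bigchoice L)

def bigseq : List (PExp α ν) → PExp α ν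
  | [] => .eps
  | e :: L => .seq e (bigseq L)

theorem bigchoice_none {L : List (PExp α ν)} {x : List α}
    (h : ∀ e ∈ L, PegRec R e x none) : PegRec R (bigchoice L) x none := by
  induction L with
  | nil => exact .fail x
  | cons e L ih =>
      exact .choice₂ _ _ _ _ (h e (by simp)) (ih (fun e' he' => h e' (by simp [he'])))

theorem bigchoice_some {L₁ L₂ : List (PExp α ν)} {e : PExp α ν} {x y : List α}
    (h₁ : ∀ e' ∈ L₁, PegRec R e' x none) (h : PegRec R e x (some y)) :
    PegRec R (bigchoice (L₁ ++ e :: L₂)) x (some y) := by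
  induction L₁ with
  | nil => exact .choice₁ _ _ _ _ h
  | cons e' L₁ ih =>
      exact .choice₂ _ _ _ _ (h₁ e' (by simp))
        (ih (fun e'' he'' => h₁ e'' (by simp [he''])))

theorem seq_pred {p e : PExp α ν} {x : List α} {r : Option (List α)}
    (hp : PegRec R p x (some [])) (he : PegRec R e x r) :
    PegRec R (.seq p e) x r := by
  match r, he with
  | some y, he =>
      have := PegRec.seqOk (R := R) p e [] x y hp he
      simpa using this
  | none, he =>
      have := PegRec.seqFail₂ (R := R) p e [] x hp he
      simpa using this

theorem seq_pred_fail {p e : PExp α ν} {x : List α}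
    (hp : PegRec R p x none) : PegRec R (.seq p e) x none :=
  .seqFail₁ _ _ _ hp

theorem bigseq_some {L : List (PExp α ν)} {x : List α}
    (h : ∀ e ∈ L, PegRec R e x (some [])) : PegRec R (bigseq L) x (some []) := by
  induction L with
  | nil => exact .eps x
  | cons e L ih =>
      exact seq_pred (h e (by simp)) (ih (fun e' he' => h e' (by simp [he'])))

theorem bigseq_none {L₁ L₂ : List (PExp α ν)} {e : PExp α ν} {x : List α}
    (h₁ : ∀ e' ∈ L₁, PegRec R e' x (some [])) (h : PegRec R e x none) :
    PegRec R (bigseq (L₁ ++ e :: L₂)) x none := by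
  induction L₁ with
  | nil => exact seq_pred_fail h
  | cons e' L₁ ih =>
      exact seq_pred (h₁ e' (by simp))
        (ih (fun e'' he'' => h₁ e'' (by simp [he''])))

theorem grounded_gif {rank : ν → ℕ} {r : ℕ} {c : Prop} {e : PExp α ν}
    (h : Grounded rank r e) : Grounded rank r (gif c e) := by
  unfold gif
  split
  · exact h
  · trivial

theorem grounded_bigchoice {rank : ν → ℕ} {r : ℕ} {L : List (PExp α ν)}
    (h : ∀ e ∈ L, Grounded rank r e) : Grounded rank r (bigchoice L) := by
  induction L with
  | nil => trivial
  | cons e L ih =>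
      exact ⟨h e (by simp), ih (fun e' he' => h e' (by simp [he']))⟩

theorem grounded_bigseq {rank : ν → ℕ} {r : ℕ} {L : List (PExp α ν)}
    (h : ∀ e ∈ L, Grounded rank r e) : Grounded rank r (bigseq L) := by
  induction L with
  | nil => trivial
  | cons e L ih =>
      exact ⟨h e (by simp), Or.inl (ih (fun e' he' => h e' (by simp [he'])))⟩

theorem scons_bigchoice {L : List (PExp α ν)}
    (h : ∀ e ∈ L, SCons e) : SCons (bigchoice L) := by
  induction L with
  | nil => trivial
  | cons e L ih =>
      exact ⟨h e (by simp), ih (fun e' he' => h e' (by simp [he']))⟩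

end PegAux

/-! ## Scaffold lemmas -/

namespace ScAux

variable {d : ℕ} {Γ : Type}

/-- Two scaffolds agree on all nodes `≤ v`. -/
def Agree (S S' : Scaffold d Γ) (v : ℕ) : Prop :=
  ∀ u ≤ v, S.label u = S'.label u ∧ ∀ i, S.edge u i = S'.edge u i

theorem Agree.refl (S : Scaffold d Γ) (v : ℕ) : Agree S S v :=
  fun _ _ => ⟨rfl, fun _ => rfl⟩

theorem Agree.trans {S S' S'' : Scaffold d Γ} {v : ℕ}
    (h : Agree S S' v) (h' : Agree S' S'' v) : Agree S S'' v :=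
  fun u hu => ⟨(h u hu).1.trans (h' u hu).1, fun i => ((h u hu).2 i).trans ((h' u hu).2 i)⟩

theorem Agree.mono {S S' : Scaffold d Γ} {v v' : ℕ}
    (h : Agree S S' v) (hv : v' ≤ v) : Agree S S' v' :=
  fun u hu => h u (le_trans hu hv)

theorem nbhd_congr {S S' : Scaffold d Γ} {v : ℕ} (h : Agree S S' v) :
    ∀ (m : ℕ) (u : ℕ), u ≤ v → S.nbhd m u = S'.nbhd m u := by
  intro m
  induction m with
  | zero => intro u hu; exact (h u hu).1
  | succ m ih =>
      intro u hu
      show (S.label u, fun i => (S.edge u i).map (S.nbhd m))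
        = (S'.label u, fun i => (S'.edge u i).map (S'.nbhd m))
      refine Prod.ext ((h u hu).1 :) ?_
      funext i
      show (S.edge u i).map (S.nbhd m) = (S'.edge u i).map (S'.nbhd m)
      rw [← (h u hu).2 i]
      cases he : S.edge u i with
      | none => rfl
      | some w =>
          have hw : w ≤ u := S.back u i w he
          simp [ih w (le_trans hw hu)]

theorem follow_congr {S S' : Scaffold d Γ} {v : ℕ} (h : Agree S S' v) :
    ∀ (l : List (Fin d)) (u : ℕ), u ≤ v → S.follow l u = S'.follow l u := by
  intro l
  induction l with
  | nil => intro u hu; rfl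
  | cons i l ih =>
      intro u hu
      show (S.edge u i).bind (S.follow l) = (S'.edge u i).bind (S'.follow l)
      rw [← (h u hu).2 i]
      cases he : S.edge u i with
      | none => rfl
      | some w =>
          have hw : w ≤ u := S.back u i w he
          simp [ih w (le_trans hw hu)]

theorem extend_agree {k : ℕ} (S : Scaffold d Γ) (γ : Γ) (ps : Fin d → PathSpec d k) :
    Agree S (S.extend γ ps) S.top := by
  intro u hu
  constructor
  · show _ = (if u = S.top + 1 then _ else if u ≤ S.top then S.label u else none)
    rw [if_neg (by omega), if_pos hu]
  · intro i
    show _ = (if u = S.top + 1 then _ else if u ≤ S.top then S.edge u i else none)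
    rw [if_neg (by omega), if_pos hu]

theorem extend_label_top {k : ℕ} (S : Scaffold d Γ) (γ : Γ) (ps : Fin d → PathSpec d k) :
    (S.extend γ ps).label (S.top + 1) = some γ := by
  show (if S.top + 1 = S.top + 1 then _ else _) = _
  rw [if_pos rfl]

theorem extend_edge_top {k : ℕ} (S : Scaffold d Γ) (γ : Γ) (ps : Fin d → PathSpec d k)
    (j : Fin d) :
    (S.extend γ ps).edge (S.top + 1) j =
      (match ps j with
        | .missing => none
        | .self => some (S.top + 1)
        | .path l _ => S.follow l S.top) := by
  show (if S.top + 1 = S.top + 1 then _ else _) = _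
  rw [if_pos rfl]

theorem extend_top {k : ℕ} (S : Scaffold d Γ) (γ : Γ) (ps : Fin d → PathSpec d k) :
    (S.extend γ ps).top = S.top + 1 := rfl

/-- Truncation of neighbourhoods. -/
def trN : ∀ {m : ℕ}, Nbhd d Γ (m + 1) → Nbhd d Γ m
  | 0, M => M.1
  | _+1, M => (M.1, fun i => (M.2 i).map trN)

theorem tr_nbhd (S : Scaffold d Γ) : ∀ (m v : ℕ), trN (S.nbhd (m + 1) v) = S.nbhd m v := by
  intro m
  induction m with
  | zero => intro v; rfl
  | succ m ih =>
      intro v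
      show (S.label v, fun i => ((S.edge v i).map (S.nbhd (m+1))).map trN)
        = (S.label v, fun i => (S.edge v i).map (S.nbhd m))
      refine Prod.ext rfl ?_
      funext i
      show ((S.edge v i).map (S.nbhd (m+1))).map trN = (S.edge v i).map (S.nbhd m)
      cases S.edge v i with
      | none => rfl
      | some w => simp [ih w]

/-- The neighbourhood of a node in the initial scaffold. -/
def initN (d : ℕ) (Γ : Type) : ∀ m : ℕ, Nbhd d Γ m
  | 0 => none
  | _+1 => (none, fun _ => none)

theorem init_nbhd : ∀ (m v : ℕ), (Scaffold.init d Γ).nbhd m v = initN d Γ m := by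
  intro m
  cases m with
  | zero => intro v; rfl
  | succ m => intro v; rfl

/-- The label component of a neighbourhood. -/
def nlabel : ∀ {m : ℕ}, Nbhd d Γ m → Option Γ
  | 0, M => M
  | _+1, M => M.1

theorem nlabel_nbhd (S : Scaffold d Γ) : ∀ (m v : ℕ), nlabel (S.nbhd m v) = S.label v := by
  intro m v
  cases m with
  | zero => rfl
  | succ m => rfl

theorem nlabel_initN : ∀ m : ℕ, nlabel (initN d Γ m) = none := by
  intro m; cases m <;> rfl

/-! ### Automaton run lemmas -/

theorem run_snoc {σ : Type} (A : SAutomaton σ) (x : List σ) (a : σ) :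
    A.run (x ++ [a]) = A.step a (A.run x) := by
  simp [SAutomaton.run, List.foldl_append]

theorem run_top {σ : Type} (A : SAutomaton σ) : ∀ (x : List σ), (A.run x).2.top = x.length := by
  intro x
  induction x using List.reverseRecOn with
  | nil => rfl
  | append_singleton x a ih =>
      rw [run_snoc]
      show ((A.run x).2.extend _ _).top = _
      rw [extend_top, ih]
      simp

theorem run_agree {σ : Type} (A : SAutomaton σ) (x y : List σ) :
    Agree (A.run x).2 (A.run (x ++ y)).2 x.length := by
  induction y using List.reverseRecOn with
  | nil => simpa using Agree.refl _ _
  | append_singleton y a ih =>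
      rw [← List.append_assoc, run_snoc]
      refine ih.trans ?_
      show Agree _ ((A.run (x ++ y)).2.extend _ _) _
      refine (extend_agree _ _ _).mono ?_
      rw [run_top]
      simp

end ScAux
/-! ## More combinator lemmas -/

namespace PegAux

variable {α ν : Type} {R : ν → PExp α ν}

theorem bigchoice_map_some {β : Type} {f : β → PExp α ν} :
    ∀ {L : List β} {b : β} {x y : List α},
      b ∈ L → PegRec R (f b) x (some y) →
      (∀ b' ∈ L, b' ≠ b → PegRec R (f b') x none) →
      PegRec R (bigchoice (L.map f)) x (some y) := by
  classical
  intro L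
  induction L with
  | nil => intro b x y hb; exact absurd hb (by simp)
  | cons b' L ih =>
      intro b x y hb hsucc hfail
      by_cases hbb : b' = b
      · subst hbb
        exact .choice₁ _ _ _ _ hsucc
      · refine .choice₂ _ _ _ _ (hfail b' (by simp) hbb) ?_
        refine ih ((List.mem_cons.mp hb).resolve_left (fun hh => hbb hh.symm)) hsucc ?_
        intro b'' hb'' hne
        exact hfail b'' (by simp [hb'']) hne

theorem bigchoice_map_none {β : Type} {f : β → PExp α ν} {L : List β} {x : List α}
    (h : ∀ b ∈ L, PegRec R (f b) x none) :
    PegRec R (bigchoice (L.map f)) x none := by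
  refine bigchoice_none ?_
  intro e he
  obtain ⟨b, hb, rfl⟩ := List.mem_map.mp he
  exact h b hb

theorem bigseq_ofFn_some {n : ℕ} {f : Fin n → PExp α ν} {x : List α}
    (h : ∀ j, PegRec R (f j) x (some [])) :
    PegRec R (bigseq (List.ofFn f)) x (some []) := by
  refine bigseq_some ?_
  intro e he
  obtain ⟨j, rfl⟩ := List.mem_ofFn.mp he
  exact h j

theorem bigseq_ofFn_none : ∀ {n : ℕ} {f : Fin n → PExp α ν} {x : List α},
    (∀ j, PegRec R (f j) x (some []) ∨ PegRec R (f j) x none) →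
    ∀ (j₀ : Fin n), PegRec R (f j₀) x none →
    PegRec R (bigseq (List.ofFn f)) x none := by
  intro n
  induction n with
  | zero => intro f x _ j₀; exact absurd j₀.isLt (by omega)
  | succ n ih =>
      intro f x hall j₀ hj₀
      rw [List.ofFn_succ]
      induction j₀ using Fin.cases with
      | zero => exact seq_pred_fail hj₀
      | succ i =>
          rcases hall 0 with h0 | h0
          · exact seq_pred h0 (ih (fun j => hall j.succ) i hj₀)
          · exact seq_pred_fail h0
end PegAux

/-! ## Finiteness -/

namespace ScAux

instance finOption (Γ : Type) [Finite Γ] : Finite (Option Γ) :=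
  Finite.of_equiv (Γ ⊕ PUnit.{1}) (Equiv.optionEquivSumPUnit Γ).symm

instance finNbhd (d : ℕ) (Γ : Type) [Finite Γ] : ∀ k : ℕ, Finite (Nbhd d Γ k)
  | 0 => inferInstanceAs (Finite (Option Γ))
  | k+1 =>
      have := finNbhd d Γ k
      inferInstanceAs (Finite (Option Γ × (Fin d → Option (Nbhd d Γ k))))

instance finListLe (d k : ℕ) : Finite {l : List (Fin d) // l.length ≤ k} := by
  apply Finite.of_injective
    (fun l : {l : List (Fin d) // l.length ≤ k} => (fun i : Fin k => l.val[(i : ℕ)]?))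
  intro l₁ l₂ h12
  apply Subtype.ext
  apply List.ext_getElem?
  intro i
  by_cases hi : i < k
  · exact congrFun h12 ⟨i, hi⟩
  · rw [List.getElem?_eq_none (by omega), List.getElem?_eq_none (by omega)]

end ScAux

/-! ## The construction -/

namespace Construction

open PegAux ScAux

/-- Non-terminals of the simulating grammar. -/
inductive NT (σ : Type) (A : SAutomaton σ) : Type where
  | St (q : A.Q)
  | Nb (m : ℕ) (M : Nbhd A.d A.Γ m) (hm : m ≤ A.k)
  | GoE (i : Fin A.d)
  | Go (l : List (Fin A.d)) (hl : l.length ≤ A.k)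
  | Rest
  | Start

instance finNT (σ : Type) (A : SAutomaton σ) : Finite (NT σ A) := by
  have := A.finΓ
  have := A.finQ
  apply Finite.of_injective
    (fun n : NT σ A =>
      (match n with
       | .St q => Sum.inl (Sum.inl q)
       | .Nb m M hm => Sum.inl (Sum.inr ⟨⟨m, by omega⟩, M⟩)
       | .GoE i => Sum.inr (Sum.inl (Sum.inl i))
       | .Go l hl => Sum.inr (Sum.inl (Sum.inr ⟨l, hl⟩))
       | .Rest => Sum.inr (Sum.inr true)
       | .Start => Sum.inr (Sum.inr false)
       : (A.Q ⊕ (Σ m : Fin (A.k + 1), Nbhd A.d A.Γ m)) ⊕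
         ((Fin A.d ⊕ {l : List (Fin A.d) // l.length ≤ A.k}) ⊕ Bool)))
  intro n₁ n₂ h
  cases n₁ <;> cases n₂ <;> simp_all

variable {σ : Type} [Fintype σ] (A : SAutomaton σ)

noncomputable def allOf (β : Type) [Finite β] : List β :=
  (@Finset.univ β (Fintype.ofFinite β)).toList

theorem mem_allOf {β : Type} [Finite β] (b : β) : b ∈ allOf β := by
  simp [allOf, Finset.mem_toList]

noncomputable def allTup : List (σ × A.Q × Nbhd A.d A.Γ A.k) :=
  haveI := A.finQ
  haveI := A.finΓ
  allOf _

theorem mem_allTup (t : σ × A.Q × Nbhd A.d A.Γ A.k) : t ∈ allTup A := by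
  haveI := A.finQ
  haveI := A.finΓ
  exact mem_allOf t

noncomputable def allQ : List A.Q :=
  haveI := A.finQ
  allOf _

theorem mem_allQ (q : A.Q) : q ∈ allQ A := by
  haveI := A.finQ
  exact mem_allOf q

noncomputable def anyE : PExp σ (NT σ A) := bigchoice ((allOf σ).map .term)

noncomputable def checkOne {m : ℕ} (ps : Fin A.d → PathSpec A.d A.k) (hm : m + 1 ≤ A.k)
    (M : Nbhd A.d A.Γ (m + 1)) (j : Fin A.d) : PExp σ (NT σ A) :=
  match ps j with
  | .missing => gif (M.2 j = none) .eps
  | .self => gif (M.2 j = some (trN M)) .eps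
  | .path l hl =>
      match M.2 j with
      | some c => .andP (.seq (.nt (.Go l hl)) (.nt (.Nb m c (by omega))))
      | none => .notP (.nt (.Go l hl))

noncomputable def checks :
    ∀ (m : ℕ), m ≤ A.k → Nbhd A.d A.Γ m → (Fin A.d → PathSpec A.d A.k) → PExp σ (NT σ A)
  | 0, _, _, _ => .eps
  | m+1, hm, M, ps => bigseq (List.ofFn (fun j => checkOne A ps hm M j))

noncomputable def nbInner (a : σ) (q' : A.Q) (N' : Nbhd A.d A.Γ A.k)
    (m : ℕ) (hm : m ≤ A.k) (M : Nbhd A.d A.Γ m) : PExp σ (NT σ A) :=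
  gif (nlabel M = some (A.δ q' a N').2.1)
    (.seq (.andP (.nt (.St q')))
      (.seq (.andP (.nt (.Nb A.k N' le_rfl)))
        (checks A m hm M (A.δ q' a N').2.2)))

noncomputable def goPost (a : σ) (q' : A.Q) (N' : Nbhd A.d A.Γ A.k) (i : Fin A.d) :
    PExp σ (NT σ A) :=
  match (A.δ q' a N').2.2 i with
  | .missing => .fail
  | .self => .eps
  | .path l hl => .seq (.term a) (.nt (.Go l hl))

noncomputable def guard (a : σ) (q' : A.Q) (N' : Nbhd A.d A.Γ A.k) : PExp σ (NT σ A) :=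
  .andP (.seq (.term a) (.seq (.andP (.nt (.St q'))) (.andP (.nt (.Nb A.k N' le_rfl)))))

noncomputable def rules : NT σ A → PExp σ (NT σ A)
  | .St q => .andP (.choice (gif (q = A.q0) (.notP (anyE A)))
      (bigchoice ((allTup A).map (fun t =>
        gif ((A.δ t.2.1 t.1 t.2.2).1 = q)
          (.seq (.term t.1)
            (.seq (.andP (.nt (.St t.2.1))) (.andP (.nt (.Nb A.k t.2.2 le_rfl)))))))))
  | .Nb m M hm => .andP (.choice (gif (M = initN A.d A.Γ m) (.notP (anyE A)))
      (bigchoice ((allTup A).map (fun t =>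
        .seq (.term t.1) (nbInner A t.1 t.2.1 t.2.2 m hm M)))))
  | .GoE i => bigchoice ((allTup A).map (fun t =>
      .seq (guard A t.1 t.2.1 t.2.2) (goPost A t.1 t.2.1 t.2.2 i)))
  | .Go [] _ => .eps
  | .Go (i :: l) h =>
      .seq (.nt (.GoE i)) (.nt (.Go l (by simp only [List.length_cons] at h; omega)))
  | .Rest => .choice (.seq (anyE A) (.nt .Rest)) .eps
  | .Start => .seq
      (bigchoice ((allQ A).map (fun q => gif (q ∈ A.F) (.andP (.nt (.St q))))))
      (.nt .Rest)

def rank : NT σ A → ℕ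
  | .St _ => 0
  | .Nb _ _ _ => 0
  | .GoE _ => 0
  | .Go l _ => l.length + 1
  | .Rest => 1
  | .Start => 2

theorem grounded_anyE (r : ℕ) : Grounded (rank A) r (anyE A) := by
  refine grounded_bigchoice ?_
  intro e he
  obtain ⟨a, _, rfl⟩ := List.mem_map.mp he
  trivial

theorem scons_anyE : SCons (anyE (σ := σ) A) := by
  refine scons_bigchoice ?_
  intro e he
  obtain ⟨a, _, rfl⟩ := List.mem_map.mp he
  trivial

theorem grounded_seq_eq {α ν : Type} {rank : ν → ℕ} {r : ℕ} {e₁ e₂ : PExp α ν} :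
    Grounded rank r (.seq e₁ e₂) = (Grounded rank r e₁ ∧ (Grounded rank r e₂ ∨ SCons e₁)) := rfl

theorem grounded_andP_eq {α ν : Type} {rank : ν → ℕ} {r : ℕ} {e : PExp α ν} :
    Grounded rank r (.andP e) = Grounded rank r e := rfl

theorem rules_grounded : ∀ B : NT σ A, Grounded (rank A) (rank A B) (rules A B) := by
  intro B
  cases B with
  | St q =>
      show Grounded _ _ (PExp.andP (.choice _ _))
      refine (⟨?_, ?_⟩ : _ ∧ _)
      · exact grounded_gif (grounded_anyE A _)
      · refine grounded_bigchoice ?_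
        intro e he
        obtain ⟨t, _, rfl⟩ := List.mem_map.mp he
        refine grounded_gif ?_
        rw [grounded_seq_eq]
        exact ⟨trivial, Or.inr trivial⟩
  | Nb m M hm =>
      show Grounded _ _ (PExp.andP (.choice _ _))
      refine (⟨?_, ?_⟩ : _ ∧ _)
      · exact grounded_gif (grounded_anyE A _)
      · refine grounded_bigchoice ?_
        intro e he
        obtain ⟨t, _, rfl⟩ := List.mem_map.mp he
        rw [grounded_seq_eq]
        exact ⟨trivial, Or.inr trivial⟩
  | GoE i =>
      refine grounded_bigchoice ?_
      intro e he
      obtain ⟨t, _, rfl⟩ := List.mem_map.mp he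
      rw [grounded_seq_eq]
      refine ⟨?_, Or.inl ?_⟩
      · unfold guard
        rw [grounded_andP_eq, grounded_seq_eq]
        exact ⟨trivial, Or.inr trivial⟩
      · unfold goPost
        rcases hps : (A.δ t.2.1 t.1 t.2.2).2.2 i with ⟨l, hl⟩ | _ | _ <;> simp only [hps]
        · rw [grounded_seq_eq]
          exact ⟨trivial, Or.inr trivial⟩
        · trivial
        · trivial
  | Go l hl =>
      cases l with
      | nil => trivial
      | cons i l =>
          refine ⟨?_, Or.inl ?_⟩
          · show rank A (.GoE i) < (i :: l).length + 1
            simp [rank]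
          · show rank A (.Go l _) < (i :: l).length + 1
            simp [rank]
  | Rest =>
      exact ⟨⟨grounded_anyE A _, Or.inr (scons_anyE A)⟩, trivial⟩
  | Start =>
      refine ⟨?_, Or.inl (by simp [rank, Grounded])⟩
      refine grounded_bigchoice ?_
      intro e he
      obtain ⟨q, _, rfl⟩ := List.mem_map.mp he
      refine grounded_gif ?_
      show rank A (.St q) < 2
      simp [rank]

end Construction
/-! ## Sequencing with a leading terminal -/

namespace PegAux

variable {α ν : Type} {R : ν → PExp α ν}

theorem seq_term_some {b : α} {X : PExp α ν} {t y : List α}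
    (h : PegRec R X t (some y)) :
    PegRec R (.seq (.term b) X) (b :: t) (some (b :: y)) :=
  PegRec.seqOk (.term b) X [b] t y (.termOk b t) h

theorem seq_term_none {b : α} {X : PExp α ν} {t : List α}
    (h : PegRec R X t none) : PegRec R (.seq (.term b) X) (b :: t) none :=
  PegRec.seqFail₂ (.term b) X [b] t (.termOk b t) h

theorem seq_term_mismatch {b a : α} {X : PExp α ν} {t : List α} (h : b ≠ a) :
    PegRec R (.seq (.term b) X) (a :: t) none :=
  .seqFail₁ _ _ _ (.termMismatch b a t h)

theorem seq_term_nil {b : α} {X : PExp α ν} : PegRec R (.seq (.term b) X) [] none :=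
  .seqFail₁ _ _ _ (.termNil b)

end PegAux

/-! ## Local consistency of neighbourhoods -/

namespace ScAux

variable {d : ℕ} {Γ : Type}

def Consist (S : Scaffold d Γ) (v : ℕ) : ∀ (m : ℕ), Nbhd d Γ m → Prop
  | 0, M => M = S.label v
  | m+1, M => M.1 = S.label v ∧ ∀ j : Fin d,
      (S.edge v j = none → M.2 j = none) ∧
      (S.edge v j = some v → M.2 j = some (trN M)) ∧
      (∀ w, S.edge v j = some w → w ≠ v → M.2 j = some (S.nbhd m w))

theorem consist_trN {S : Scaffold d Γ} {v : ℕ} :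
    ∀ {m : ℕ} {M : Nbhd d Γ (m+1)}, Consist S v (m+1) M → Consist S v m (trN M) := by
  intro m
  induction m with
  | zero => intro M h; exact h.1
  | succ m ih =>
      intro M h
      refine ⟨h.1, fun j => ⟨?_, ?_, ?_⟩⟩
      · intro he
        show (M.2 j).map trN = none
        rw [(h.2 j).1 he]; rfl
      · intro he
        show (M.2 j).map trN = some (trN (trN M))
        rw [(h.2 j).2.1 he]; rfl
      · intro w he hw
        show (M.2 j).map trN = some (S.nbhd m w)
        rw [(h.2 j).2.2 w he hw]
        show some (trN (S.nbhd (m+1) w)) = _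
        rw [tr_nbhd]

theorem consist_unique {S : Scaffold d Γ} {v : ℕ} :
    ∀ (m : ℕ) (M : Nbhd d Γ m), Consist S v m M → M = S.nbhd m v := by
  intro m
  induction m with
  | zero => intro M h; exact h
  | succ m ih =>
      intro M h
      have h2 : M.2 = fun j => (S.edge v j).map (S.nbhd m) := by
        funext j
        cases he : S.edge v j with
        | none => rw [(h.2 j).1 he]; rfl
        | some w =>
            by_cases hw : w = v
            · subst hw
              rw [(h.2 j).2.1 he]
              have : trN M = S.nbhd m w := ih (trN M) (consist_trN h)
              rw [this]; rfl
            · rw [(h.2 j).2.2 w he hw]; rfl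
      show M = (S.label v, fun j => (S.edge v j).map (S.nbhd m))
      exact Prod.ext h.1 h2

theorem consist_nbhd (S : Scaffold d Γ) (v : ℕ) :
    ∀ m : ℕ, Consist S v m (S.nbhd m v) := by
  intro m
  cases m with
  | zero => rfl
  | succ m =>
      refine ⟨rfl, fun j => ⟨?_, ?_, ?_⟩⟩
      · intro he
        show (S.edge v j).map (S.nbhd m) = none
        rw [he]; rfl
      · intro he
        show (S.edge v j).map (S.nbhd m) = some (trN (S.nbhd (m+1) v))
        rw [he, tr_nbhd]; rfl
      · intro w he hw
        show (S.edge v j).map (S.nbhd m) = some (S.nbhd m w)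
        rw [he]; rfl

end ScAux

/-! ## Run decomposition and the specification of each non-terminal -/

namespace Construction

open PegAux ScAux
open scoped Classical

variable {σ : Type} [Fintype σ] (A : SAutomaton σ)

def st (z : List σ) : A.Q := (A.run z.reverse).1

def Sc (z : List σ) : Scaffold A.d A.Γ := (A.run z.reverse).2

/-- The transition data used by the automaton at the step corresponding to
reading symbol `a` with suffix `t` remaining afterwards. -/
def outf (a : σ) (t : List σ) : A.Q × A.Γ × (Fin A.d → PathSpec A.d A.k) :=
  A.δ (st A t) a ((Sc A t).nbhd A.k t.length)

theorem Sc_top (z : List σ) : (Sc A z).top = z.length := by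
  simp [Sc, run_top]

theorem st_nil : st A [] = A.q0 := rfl

theorem Sc_nil : Sc A [] = Scaffold.init A.d A.Γ := rfl

theorem st_cons (a : σ) (t : List σ) : st A (a :: t) = (outf A a t).1 := by
  show (A.run (a :: t).reverse).1 = _
  rw [List.reverse_cons, run_snoc]
  show (A.δ (st A t) a ((Sc A t).nbhd A.k (Sc A t).top)).1 = _
  rw [Sc_top, outf]

theorem Sc_cons (a : σ) (t : List σ) :
    Sc A (a :: t) = (Sc A t).extend (outf A a t).2.1 (outf A a t).2.2 := by
  show (A.run (a :: t).reverse).2 = _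
  rw [List.reverse_cons, run_snoc]
  show (Sc A t).extend (A.δ (st A t) a ((Sc A t).nbhd A.k (Sc A t).top)).2.1
      (A.δ (st A t) a ((Sc A t).nbhd A.k (Sc A t).top)).2.2 = _
  rw [Sc_top, outf]

/-- Scaffolds of a word and of one of its suffixes agree on the nodes that
already exist at the suffix. -/
theorem Sc_drop_agree (z : List σ) (w : ℕ) (hw : w ≤ z.length) :
    Agree (Sc A (z.drop (z.length - w))) (Sc A z) w := by
  have hz : z.reverse = (z.drop (z.length - w)).reverse ++ (z.take (z.length - w)).reverse := by
    rw [← List.reverse_append, List.take_append_drop]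
  have h := run_agree A (z.drop (z.length - w)).reverse (z.take (z.length - w)).reverse
  rw [← hz] at h
  have hlen : (z.drop (z.length - w)).reverse.length = w := by
    simp; omega
  rw [hlen] at h
  exact h

open Classical in
/-- The intended value of every non-terminal on every input. -/
noncomputable def spec : NT σ A → List σ → Option (List σ)
  | .St q, z => if st A z = q then some [] else none
  | .Nb m M _, z => if (Sc A z).nbhd m z.length = M then some [] else none
  | .GoE i, z =>
      match (Sc A z).edge z.length i with
      | some w => some (z.take (z.length - w))
      | none => none
  | .Go l _, z =>
      match (Sc A z).follow l z.length with
      | some w => some (z.take (z.length - w))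
      | none => none
  | .Rest, z => some z
  | .Start, z => if st A z ∈ A.F then some z else none

end Construction
namespace Construction

open PegAux ScAux
open scoped Classical

variable {σ : Type} [Fintype σ] (A : SAutomaton σ)

theorem anyE_nil : PegRec (rules A) (anyE A) [] none := by
  refine bigchoice_map_none ?_
  intro b _
  exact .termNil b

theorem anyE_cons (a : σ) (t : List σ) : PegRec (rules A) (anyE A) (a :: t) (some [a]) := by
  refine bigchoice_map_some (mem_allOf a) (.termOk a t) ?_
  intro b _ hb
  exact .termMismatch b a t hb

theorem spec_St_some {q : A.Q} {z : List σ} (h : st A z = q) :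
    spec A (.St q) z = some [] := by simp [spec, h]

theorem spec_St_none {q : A.Q} {z : List σ} (h : st A z ≠ q) :
    spec A (.St q) z = none := by simp [spec, h]

theorem spec_Nb_some {m : ℕ} {M : Nbhd A.d A.Γ m} {hm : m ≤ A.k} {z : List σ}
    (h : (Sc A z).nbhd m z.length = M) :
    spec A (.Nb m M hm) z = some [] := by simp [spec, h]

theorem spec_Nb_none {m : ℕ} {M : Nbhd A.d A.Γ m} {hm : m ≤ A.k} {z : List σ}
    (h : (Sc A z).nbhd m z.length ≠ M) :
    spec A (.Nb m M hm) z = none := by simp [spec, h]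

theorem spec_GoE_some {i : Fin A.d} {z : List σ} {w : ℕ}
    (h : (Sc A z).edge z.length i = some w) :
    spec A (.GoE i) z = some (z.take (z.length - w)) := by
  simp only [spec]; rw [h]

theorem spec_GoE_none {i : Fin A.d} {z : List σ}
    (h : (Sc A z).edge z.length i = none) :
    spec A (.GoE i) z = none := by
  simp only [spec]; rw [h]

theorem spec_Go_some {l : List (Fin A.d)} {hl : l.length ≤ A.k} {z : List σ} {w : ℕ}
    (h : (Sc A z).follow l z.length = some w) :
    spec A (.Go l hl) z = some (z.take (z.length - w)) := by
  simp only [spec]; rw [h]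

theorem spec_Go_none {l : List (Fin A.d)} {hl : l.length ≤ A.k} {z : List σ}
    (h : (Sc A z).follow l z.length = none) :
    spec A (.Go l hl) z = none := by
  simp only [spec]; rw [h]

theorem spec_Rest (z : List σ) : spec A .Rest z = some z := rfl

/-- Evaluation of the two-predicate sequence checking state and neighbourhood. -/
theorem inner_guard_eval (t : List σ) (q' : A.Q) (N' : Nbhd A.d A.Γ A.k)
    (hSt : PegRec (rules A) (.nt (.St q')) t (spec A (.St q') t))
    (hNb : PegRec (rules A) (.nt (.Nb A.k N' le_rfl)) t (spec A (.Nb A.k N' le_rfl) t)) :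
    PegRec (rules A) (.seq (.andP (.nt (.St q'))) (.andP (.nt (.Nb A.k N' le_rfl)))) t
      (if st A t = q' ∧ (Sc A t).nbhd A.k t.length = N' then some [] else none) := by
  by_cases h1 : st A t = q'
  · rw [spec_St_some A h1] at hSt
    by_cases h2 : (Sc A t).nbhd A.k t.length = N'
    · rw [spec_Nb_some A h2] at hNb
      rw [if_pos ⟨h1, h2⟩]
      exact seq_pred (.andSucc _ _ _ hSt) (.andSucc _ _ _ hNb)
    · rw [spec_Nb_none A h2] at hNb
      rw [if_neg (by tauto)]
      exact seq_pred (.andSucc _ _ _ hSt) (.andFail _ _ hNb)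
  · rw [spec_St_none A h1] at hSt
    rw [if_neg (by tauto)]
    exact seq_pred_fail (.andFail _ _ hSt)

theorem guard_eval (b : σ) (q' : A.Q) (N' : Nbhd A.d A.Γ A.k) (a : σ) (t : List σ)
    (hSt : PegRec (rules A) (.nt (.St q')) t (spec A (.St q') t))
    (hNb : PegRec (rules A) (.nt (.Nb A.k N' le_rfl)) t (spec A (.Nb A.k N' le_rfl) t)) :
    PegRec (rules A) (guard A b q' N') (a :: t)
      (if b = a ∧ st A t = q' ∧ (Sc A t).nbhd A.k t.length = N' then some [] else none) := by
  by_cases hb : b = a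
  · subst hb
    have hin := inner_guard_eval A t q' N' hSt hNb
    by_cases h2 : st A t = q' ∧ (Sc A t).nbhd A.k t.length = N'
    · rw [if_pos h2] at hin
      rw [if_pos ⟨rfl, h2⟩]
      exact .andSucc _ _ _ (seq_term_some hin)
    · rw [if_neg h2] at hin
      rw [if_neg (by tauto)]
      exact .andFail _ _ (seq_term_none hin)
  · rw [if_neg (by tauto)]
    exact .andFail _ _ (seq_term_mismatch hb)

theorem guard_nil (b : σ) (q' : A.Q) (N' : Nbhd A.d A.Γ A.k) :
    PegRec (rules A) (guard A b q' N') [] none :=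
  .andFail _ _ seq_term_nil

/-- The `St` case of the main lemma. -/
theorem st_spec (z : List σ)
    (ih : ∀ z' : List σ, z'.length < z.length → ∀ B, PegRec (rules A) (.nt B) z' (spec A B z'))
    (q : A.Q) :
    PegRec (rules A) (rules A (.St q)) z (spec A (.St q) z) := by
  cases z with
  | nil =>
      by_cases hq : q = A.q0
      · rw [spec_St_some A (by rw [st_nil, hq])]
        refine .andSucc _ _ [] (.choice₁ _ _ _ _ ?_)
        rw [gif_pos hq]
        exact .notFail _ _ (anyE_nil A)
      · rw [spec_St_none A (by rw [st_nil]; exact fun h => hq h.symm)]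
        refine .andFail _ _ (.choice₂ _ _ _ _ ?_ ?_)
        · rw [gif_neg hq]; exact .fail []
        · refine bigchoice_map_none ?_
          intro tt _
          by_cases hc : (A.δ tt.2.1 tt.1 tt.2.2).1 = q
          · rw [gif_pos hc]; exact seq_term_nil
          · rw [gif_neg hc]; exact .fail []
  | cons a t =>
      have hlt : t.length < (a :: t).length := by simp
      have hbase : PegRec (rules A) (gif (q = A.q0) (.notP (anyE A))) (a :: t) none := by
        by_cases hq : q = A.q0
        · rw [gif_pos hq]; exact .notSucc _ _ _ (anyE_cons A a t)
        · rw [gif_neg hq]; exact .fail _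
      have hbr : ∀ tt : σ × A.Q × Nbhd A.d A.Γ A.k,
          PegRec (rules A) (gif ((A.δ tt.2.1 tt.1 tt.2.2).1 = q)
            (.seq (.term tt.1)
              (.seq (.andP (.nt (.St tt.2.1))) (.andP (.nt (.Nb A.k tt.2.2 le_rfl))))))
            (a :: t)
            (if (A.δ tt.2.1 tt.1 tt.2.2).1 = q ∧ tt.1 = a ∧ st A t = tt.2.1 ∧
                (Sc A t).nbhd A.k t.length = tt.2.2 then some [a] else none) := by
        rintro ⟨b, q', N'⟩
        by_cases hc : (A.δ q' b N').1 = q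
        · rw [gif_pos hc]
          by_cases hb : b = a
          · subst hb
            have hin := inner_guard_eval A t q' N' (ih t hlt _) (ih t hlt _)
            by_cases h2 : st A t = q' ∧ (Sc A t).nbhd A.k t.length = N'
            · rw [if_pos h2] at hin
              rw [if_pos ⟨hc, rfl, h2⟩]
              exact seq_term_some hin
            · rw [if_neg h2] at hin
              rw [if_neg (by tauto)]
              exact seq_term_none hin
          · rw [if_neg (by tauto)]
            exact seq_term_mismatch hb
        · rw [gif_neg hc, if_neg (by tauto)]
          exact .fail _
      have hst : st A (a :: t)
          = (A.δ (st A t) a ((Sc A t).nbhd A.k t.length)).1 := st_cons A a t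
      by_cases hq : st A (a :: t) = q
      · rw [spec_St_some A hq]
        refine .andSucc _ _ [a] (.choice₂ _ _ _ _ hbase ?_)
        refine bigchoice_map_some
          (mem_allTup A (a, st A t, (Sc A t).nbhd A.k t.length)) ?_ ?_
        · have h := hbr (a, st A t, (Sc A t).nbhd A.k t.length)
          rw [if_pos ⟨by rw [← hst, hq], rfl, rfl, rfl⟩] at h
          exact h
        · rintro ⟨b, q', N'⟩ _ hne
          have h := hbr (b, q', N')
          rw [if_neg ?_] at h
          · exact h
          · rintro ⟨h1, h2, h3, h4⟩
            subst h2; subst h3; subst h4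
            exact hne rfl
      · rw [spec_St_none A hq]
        refine .andFail _ _ (.choice₂ _ _ _ _ hbase ?_)
        refine bigchoice_map_none ?_
        rintro ⟨b, q', N'⟩ _
        have h := hbr (b, q', N')
        rw [if_neg ?_] at h
        · exact h
        · rintro ⟨h1, h2, h3, h4⟩
          subst h2; subst h3; subst h4
          exact hq (by rw [hst]; exact h1)

end Construction
namespace Construction

open PegAux ScAux
open scoped Classical

variable {σ : Type} [Fintype σ] (A : SAutomaton σ)

/-- The `GoE` case of the main lemma. -/
theorem goE_spec (z : List σ)
    (ih : ∀ z' : List σ, z'.length < z.length → ∀ B, PegRec (rules A) (.nt B) z' (spec A B z'))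
    (i : Fin A.d) :
    PegRec (rules A) (rules A (.GoE i)) z (spec A (.GoE i) z) := by
  cases z with
  | nil =>
      rw [spec_GoE_none A (by rw [Sc_nil]; rfl)]
      refine bigchoice_map_none ?_
      rintro ⟨b, q', N'⟩ _
      exact seq_pred_fail (guard_nil A b q' N')
  | cons a t =>
      have hlt : t.length < (a :: t).length := by simp
      have hg : ∀ b q' N', PegRec (rules A) (guard A b q' N') (a :: t)
          (if b = a ∧ st A t = q' ∧ (Sc A t).nbhd A.k t.length = N' then some [] else none) :=
        fun b q' N' => guard_eval A b q' N' a t (ih t hlt _) (ih t hlt _)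
      have hSc : Sc A (a :: t) = (Sc A t).extend (outf A a t).2.1 (outf A a t).2.2 :=
        Sc_cons A a t
      have htop : (Sc A t).top = t.length := Sc_top A t
      -- failure of all non-true tuples
      have hother : ∀ b q' N', (b, q', N') ≠ (a, st A t, (Sc A t).nbhd A.k t.length) →
          PegRec (rules A) (.seq (guard A b q' N') (goPost A b q' N' i)) (a :: t) none := by
        intro b q' N' hne
        have h := hg b q' N'
        rw [if_neg (by rintro ⟨rfl, rfl, rfl⟩; exact hne rfl)] at h
        exact .seqFail₁ _ _ _ h
      have hgood : PegRec (rules A) (guard A a (st A t) ((Sc A t).nbhd A.k t.length)) (a :: t)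
          (some []) := by
        have h := hg a (st A t) ((Sc A t).nbhd A.k t.length)
        rw [if_pos ⟨rfl, rfl, rfl⟩] at h
        exact h
      have hpost0 : goPost A a (st A t) ((Sc A t).nbhd A.k t.length) i =
          (match (outf A a t).2.2 i with
            | .missing => .fail
            | .self => .eps
            | .path l hl => .seq (.term a) (.nt (.Go l hl))) := rfl
      rcases hps : (outf A a t).2.2 i with ⟨l, hl⟩ | _ | _
      · -- path
        have hedge : (Sc A (a :: t)).edge (a :: t).length i = (Sc A t).follow l t.length := by
          rw [hSc, List.length_cons, ← htop, extend_edge_top, hps]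
        have hpost : goPost A a (st A t) ((Sc A t).nbhd A.k t.length) i =
            .seq (.term a) (.nt (.Go l hl)) := by rw [hpost0, hps]
        have hGo := ih t hlt (.Go l hl)
        cases hfw : (Sc A t).follow l t.length with
        | none =>
            rw [spec_GoE_none A (hedge.trans hfw)]
            refine bigchoice_map_none ?_
            rintro ⟨b, q', N'⟩ _
            by_cases hne : (b, q', N') = (a, st A t, (Sc A t).nbhd A.k t.length)
            · rw [hne]
              rw [spec_Go_none A hfw] at hGo
              refine seq_pred hgood ?_
              rw [hpost]
              exact seq_term_none hGo
            · exact hother b q' N' hne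
        | some w =>
            have hw : w ≤ t.length := (Sc A t).follow_le l t.length w hfw
            rw [spec_GoE_some A (hedge.trans hfw)]
            have htake : (a :: t).take ((a :: t).length - w) = a :: t.take (t.length - w) := by
              rw [List.length_cons]
              rw [show t.length + 1 - w = (t.length - w) + 1 by omega]
              rfl
            rw [htake]
            refine bigchoice_map_some
              (mem_allTup A (a, st A t, (Sc A t).nbhd A.k t.length)) ?_ ?_
            · refine seq_pred hgood ?_
              rw [hpost]
              rw [spec_Go_some A hfw] at hGo
              exact seq_term_some hGo
            · rintro ⟨b, q', N'⟩ _ hne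
              exact hother b q' N' hne
      · -- self
        have hedge : (Sc A (a :: t)).edge (a :: t).length i = some (t.length + 1) := by
          rw [hSc, List.length_cons, ← htop, extend_edge_top, hps]
        rw [spec_GoE_some A hedge]
        have htake : (a :: t).take ((a :: t).length - (t.length + 1)) = [] := by
          simp
        rw [htake]
        refine bigchoice_map_some
          (mem_allTup A (a, st A t, (Sc A t).nbhd A.k t.length)) ?_ ?_
        · refine seq_pred hgood ?_
          rw [hpost0, hps]
          exact .eps _
        · rintro ⟨b, q', N'⟩ _ hne
          exact hother b q' N' hne
      · -- missing
        have hedge : (Sc A (a :: t)).edge (a :: t).length i = none := by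
          rw [hSc, List.length_cons, ← htop, extend_edge_top, hps]
        rw [spec_GoE_none A hedge]
        refine bigchoice_map_none ?_
        rintro ⟨b, q', N'⟩ _
        by_cases hne : (b, q', N') = (a, st A t, (Sc A t).nbhd A.k t.length)
        · rw [hne]
          refine seq_pred hgood ?_
          rw [hpost0, hps]
          exact .fail _
        · exact hother b q' N' hne

/-- The `Go` case of the main lemma. -/
theorem go_spec (z : List σ)
    (ih : ∀ z' : List σ, z'.length < z.length → ∀ B, PegRec (rules A) (.nt B) z' (spec A B z'))
    (hgoE : ∀ i, PegRec (rules A) (.nt (.GoE i)) z (spec A (.GoE i) z)) :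
    ∀ (l : List (Fin A.d)) (hl : l.length ≤ A.k),
      PegRec (rules A) (rules A (.Go l hl)) z (spec A (.Go l hl) z) := by
  intro l
  induction l with
  | nil =>
      intro hl
      have h0 : (Sc A z).follow [] z.length = some z.length := rfl
      rw [spec_Go_some A h0]
      have : z.take (z.length - z.length) = [] := by simp
      rw [this]
      exact .eps z
  | cons i l ihl =>
      intro hl
      have hl' : l.length ≤ A.k := by
        simp only [List.length_cons] at hl; omega
      show PegRec (rules A) (.seq (.nt (.GoE i)) (.nt (.Go l _))) z _
      cases hedge : (Sc A z).edge z.length i with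
      | none =>
          have hfoll : (Sc A z).follow (i :: l) z.length = none := by
            show ((Sc A z).edge z.length i).bind _ = none
            rw [hedge]; rfl
          rw [spec_Go_none A hfoll]
          have h1 := hgoE i
          rw [spec_GoE_none A hedge] at h1
          exact .seqFail₁ _ _ _ h1
      | some w =>
          have hw : w ≤ z.length := (Sc A z).back _ i _ hedge
          have h1 := hgoE i
          rw [spec_GoE_some A hedge] at h1
          have hzsplit : z = z.take (z.length - w) ++ z.drop (z.length - w) :=
            (List.take_append_drop _ z).symm
          have hz'len : (z.drop (z.length - w)).length = w := by
            simp; omega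
          have h2 : PegRec (rules A) (.nt (.Go l hl')) (z.drop (z.length - w))
              (spec A (.Go l hl') (z.drop (z.length - w))) := by
            by_cases hwz : w = z.length
            · have hzz : z.drop (z.length - w) = z := by
                rw [hwz, Nat.sub_self, List.drop_zero]
              rw [hzz]
              exact .ntRule _ _ _ (ihl hl')
            · exact ih _ (by omega) _
          have hagree := Sc_drop_agree A z w hw
          have hfoll : (Sc A (z.drop (z.length - w))).follow l w = (Sc A z).follow l w :=
            follow_congr hagree l w le_rfl
          have hfoll2 : (Sc A z).follow (i :: l) z.length = (Sc A z).follow l w := by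
            show ((Sc A z).edge z.length i).bind _ = _
            rw [hedge]; rfl
          cases hfw : (Sc A z).follow l w with
          | none =>
              rw [spec_Go_none A (hfoll2.trans hfw)]
              rw [spec_Go_none A (by rw [hz'len, hfoll, hfw])] at h2
              rw [hzsplit]
              refine PegRec.seqFail₂ _ _ _ _ ?_ h2
              rw [← hzsplit]
              exact h1
          | some u =>
              have hu : u ≤ w := (Sc A z).follow_le l w u hfw
              rw [spec_Go_some A (hfoll2.trans hfw)]
              rw [spec_Go_some A (by rw [hz'len, hfoll]; exact hfw)] at h2
              rw [hz'len] at h2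
              have hres : z.take (z.length - u)
                  = z.take (z.length - w) ++ (z.drop (z.length - w)).take (w - u) := by
                rw [← List.take_add]
                congr 1
                omega
              have h1' : PegRec (rules A) (.nt (.GoE i))
                  (z.take (z.length - w) ++ z.drop (z.length - w))
                  (some (z.take (z.length - w))) := by
                rw [List.take_append_drop]; exact h1
              have hok := PegRec.seqOk (R := rules A) (.nt (.GoE i)) (.nt (.Go l hl'))
                (z.take (z.length - w)) (z.drop (z.length - w))
                ((z.drop (z.length - w)).take (w - u)) h1' h2
              rw [List.take_append_drop] at hok
              rw [hres]
              exact hok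

/-- The `Rest` case of the main lemma. -/
theorem rest_spec (z : List σ)
    (ih : ∀ z' : List σ, z'.length < z.length → ∀ B, PegRec (rules A) (.nt B) z' (spec A B z')) :
    PegRec (rules A) (rules A .Rest) z (spec A .Rest z) := by
  rw [spec_Rest]
  cases z with
  | nil => exact .choice₂ _ _ _ _ (.seqFail₁ _ _ _ (anyE_nil A)) (.eps [])
  | cons a t =>
      refine .choice₁ _ _ _ _ ?_
      have h2 : PegRec (rules A) (.nt .Rest) t (some t) := by
        have h := ih t (by simp) .Rest
        rw [spec_Rest] at h
        exact h
      exact PegRec.seqOk (anyE A) _ [a] t t (anyE_cons A a t) h2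

/-- The `Start` case of the main lemma. -/
theorem start_spec (z : List σ)
    (hst : ∀ q, PegRec (rules A) (.nt (.St q)) z (spec A (.St q) z))
    (hrest : PegRec (rules A) (.nt .Rest) z (some z)) :
    PegRec (rules A) (rules A .Start) z (spec A .Start z) := by
  by_cases hf : st A z ∈ A.F
  · rw [show spec A .Start z = some z by simp [spec, hf]]
    refine seq_pred ?_ hrest
    refine bigchoice_map_some
      (f := fun q : A.Q => gif (q ∈ A.F) (PExp.andP (PExp.nt (NT.St q))))
      (mem_allQ A (st A z)) ?_ ?_
    · beta_reduce
      rw [gif_pos hf]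
      have h := hst (st A z)
      rw [spec_St_some A rfl] at h
      exact .andSucc _ _ _ h
    · intro q _ hne
      beta_reduce
      by_cases hqf : q ∈ A.F
      · rw [gif_pos hqf]
        have h := hst q
        rw [spec_St_none A (fun hh => hne hh.symm)] at h
        exact .andFail _ _ h
      · rw [gif_neg hqf]; exact .fail _
  · rw [show spec A .Start z = none by simp [spec, hf]]
    refine .seqFail₁ _ _ _ ?_
    refine bigchoice_map_none ?_
    intro q _
    by_cases hqf : q ∈ A.F
    · rw [gif_pos hqf]
      have h := hst q
      rw [spec_St_none A (fun hh => hf (hh ▸ hqf))] at h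
      exact .andFail _ _ h
    · rw [gif_neg hqf]; exact .fail _

end Construction
namespace Construction

open PegAux ScAux
open scoped Classical

variable {σ : Type} [Fintype σ] (A : SAutomaton σ)

theorem label_top (a : σ) (t : List σ) :
    (Sc A (a :: t)).label (t.length + 1) = some (outf A a t).2.1 := by
  rw [Sc_cons]
  have h := extend_label_top (Sc A t) (outf A a t).2.1 (outf A a t).2.2
  rw [Sc_top A t] at h
  exact h

theorem edge_top_path (a : σ) (t : List σ) {j : Fin A.d} {l : List (Fin A.d)}
    {hl : l.length ≤ A.k} (hps : (outf A a t).2.2 j = .path l hl) :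
    (Sc A (a :: t)).edge (t.length + 1) j = (Sc A t).follow l t.length := by
  rw [Sc_cons]
  have h := extend_edge_top (Sc A t) (outf A a t).2.1 (outf A a t).2.2 j
  rw [Sc_top A t, hps] at h
  exact h

theorem edge_top_self (a : σ) (t : List σ) {j : Fin A.d}
    (hps : (outf A a t).2.2 j = .self) :
    (Sc A (a :: t)).edge (t.length + 1) j = some (t.length + 1) := by
  rw [Sc_cons]
  have h := extend_edge_top (Sc A t) (outf A a t).2.1 (outf A a t).2.2 j
  rw [Sc_top A t, hps] at h
  exact h

theorem edge_top_missing (a : σ) (t : List σ) {j : Fin A.d}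
    (hps : (outf A a t).2.2 j = .missing) :
    (Sc A (a :: t)).edge (t.length + 1) j = none := by
  rw [Sc_cons]
  have h := extend_edge_top (Sc A t) (outf A a t).2.1 (outf A a t).2.2 j
  rw [Sc_top A t, hps] at h
  exact h

theorem nbhd_cons_agree (a : σ) (t : List σ) (m' : ℕ) (w : ℕ) (hw : w ≤ t.length) :
    (Sc A (a :: t)).nbhd m' w = (Sc A t).nbhd m' w := by
  rw [Sc_cons]
  exact (nbhd_congr (extend_agree (Sc A t) (outf A a t).2.1 (outf A a t).2.2) m' w
    (by rw [Sc_top]; exact hw)).symm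

/-- The local condition checked by `checkOne` for the `j`-th edge. -/
def condJ (a : σ) (t : List σ) (m' : ℕ) (M : Nbhd A.d A.Γ (m' + 1)) (j : Fin A.d) : Prop :=
  match (outf A a t).2.2 j with
  | .missing => M.2 j = none
  | .self => M.2 j = some (trN M)
  | .path l _ =>
      match (Sc A t).follow l t.length with
      | none => M.2 j = none
      | some w => M.2 j = some ((Sc A t).nbhd m' w)

theorem consist_of_condJ (a : σ) (t : List σ) (m' : ℕ)
    (M : Nbhd A.d A.Γ (m' + 1))
    (hlabM : M.1 = (Sc A (a :: t)).label (t.length + 1))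
    (hJ : ∀ j, condJ A a t m' M j) :
    Consist (Sc A (a :: t)) (t.length + 1) (m' + 1) M := by
  refine ⟨hlabM, fun j => ?_⟩
  have hcj := hJ j
  rcases hps : (outf A a t).2.2 j with ⟨l, hl⟩ | _ | _
  · -- path
    have hedge := edge_top_path A a t hps
    have hcj' : (match (Sc A t).follow l t.length with
        | none => M.2 j = none
        | some w => M.2 j = some ((Sc A t).nbhd m' w)) := by
      have he : condJ A a t m' M j = (match (Sc A t).follow l t.length with
        | none => M.2 j = none
        | some w => M.2 j = some ((Sc A t).nbhd m' w)) := by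
        unfold condJ; rw [hps]
      rw [← he]; exact hcj
    cases hfw : (Sc A t).follow l t.length with
    | none =>
        rw [hfw] at hcj'
        refine ⟨fun _ => hcj', fun he => ?_, fun w he hw => ?_⟩
        · exfalso
          rw [hedge, hfw] at he
          cases he
        · exfalso
          rw [hedge, hfw] at he
          cases he
    | some w =>
        have hwle : w ≤ t.length := (Sc A t).follow_le l t.length w hfw
        rw [hfw] at hcj'
        refine ⟨fun he => ?_, fun he => ?_, fun w' he hw' => ?_⟩
        · exfalso
          rw [hedge, hfw] at he
          cases he
        · exfalso
          rw [hedge, hfw] at he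
          have : w = t.length + 1 := Option.some_inj.mp he
          omega
        · rw [hedge, hfw] at he
          have hww : w = w' := Option.some_inj.mp he
          subst hww
          rw [hcj', nbhd_cons_agree A a t m' w hwle]
  · -- self
    have hedge := edge_top_self A a t hps
    have hcj' : M.2 j = some (trN M) := by
      have he : condJ A a t m' M j = (M.2 j = some (trN M)) := by
        unfold condJ; rw [hps]
      rw [← he]; exact hcj
    refine ⟨fun he => ?_, fun _ => hcj', fun w' he hw' => ?_⟩
    · exfalso; rw [hedge] at he; cases he
    · exfalso; rw [hedge] at he; exact hw' (Option.some_inj.mp he).symm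
  · -- missing
    have hedge := edge_top_missing A a t hps
    have hcj' : M.2 j = none := by
      have he : condJ A a t m' M j = (M.2 j = none) := by
        unfold condJ; rw [hps]
      rw [← he]; exact hcj
    refine ⟨fun _ => hcj', fun he => ?_, fun w' he hw' => ?_⟩
    · exfalso; rw [hedge] at he; cases he
    · exfalso; rw [hedge] at he; cases he

theorem condJ_act (a : σ) (t : List σ) (m' : ℕ) :
    ∀ j, condJ A a t m' ((Sc A (a :: t)).nbhd (m' + 1) (t.length + 1)) j := by
  intro j
  have hcons := consist_nbhd (Sc A (a :: t)) (t.length + 1) (m' + 1)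
  rcases hps : (outf A a t).2.2 j with ⟨l, hl⟩ | _ | _
  · have hedge := edge_top_path A a t hps
    have he : condJ A a t m' ((Sc A (a :: t)).nbhd (m' + 1) (t.length + 1)) j =
        (match (Sc A t).follow l t.length with
          | none => ((Sc A (a :: t)).nbhd (m' + 1) (t.length + 1)).2 j = none
          | some w => ((Sc A (a :: t)).nbhd (m' + 1) (t.length + 1)).2 j
              = some ((Sc A t).nbhd m' w)) := by
      unfold condJ; rw [hps]
    rw [he]
    cases hfw : (Sc A t).follow l t.length with
    | none => exact (hcons.2 j).1 (hedge.trans hfw)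
    | some w =>
        have hwle : w ≤ t.length := (Sc A t).follow_le l t.length w hfw
        have h := (hcons.2 j).2.2 w (hedge.trans hfw) (by omega)
        rw [h, nbhd_cons_agree A a t m' w hwle]
  · have he : condJ A a t m' ((Sc A (a :: t)).nbhd (m' + 1) (t.length + 1)) j =
        (((Sc A (a :: t)).nbhd (m' + 1) (t.length + 1)).2 j
          = some (trN ((Sc A (a :: t)).nbhd (m' + 1) (t.length + 1)))) := by
      unfold condJ; rw [hps]
    rw [he]
    exact (hcons.2 j).2.1 (edge_top_self A a t hps)
  · have he : condJ A a t m' ((Sc A (a :: t)).nbhd (m' + 1) (t.length + 1)) j =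
        (((Sc A (a :: t)).nbhd (m' + 1) (t.length + 1)).2 j = none) := by
      unfold condJ; rw [hps]
    rw [he]
    exact (hcons.2 j).1 (edge_top_missing A a t hps)

theorem checkOne_eval (a : σ) (t : List σ)
    (ih : ∀ z' : List σ, z'.length < (a :: t).length →
      ∀ B, PegRec (rules A) (.nt B) z' (spec A B z'))
    (m' : ℕ) (hm : m' + 1 ≤ A.k) (M : Nbhd A.d A.Γ (m' + 1)) (j : Fin A.d) :
    PegRec (rules A) (checkOne A (outf A a t).2.2 hm M j) t
      (if condJ A a t m' M j then some [] else none) := by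
  have hlt : t.length < (a :: t).length := by simp
  rcases hps : (outf A a t).2.2 j with ⟨l, hl⟩ | _ | _
  · -- path
    have hcj : condJ A a t m' M j = (match (Sc A t).follow l t.length with
        | none => M.2 j = none
        | some w => M.2 j = some ((Sc A t).nbhd m' w)) := by
      unfold condJ; rw [hps]
    have hco : checkOne A (outf A a t).2.2 hm M j = (match M.2 j with
        | some c => .andP (.seq (.nt (.Go l hl)) (.nt (.Nb m' c (by omega))))
        | none => .notP (.nt (.Go l hl))) := by
      unfold checkOne; rw [hps]
    rw [hco]
    have hGo := ih t hlt (.Go l hl)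
    cases hfw : (Sc A t).follow l t.length with
    | none =>
        rw [spec_Go_none A hfw] at hGo
        cases hMj : M.2 j with
        | none =>
            have hC : condJ A a t m' M j := by
              rw [hcj, hfw]; exact hMj
            rw [if_pos hC]
            exact .notFail _ _ hGo
        | some c =>
            have hC : ¬ condJ A a t m' M j := by
              rw [hcj, hfw]
              intro h
              rw [hMj] at h
              simp at h
            rw [if_neg hC]
            exact .andFail _ _ (.seqFail₁ _ _ _ hGo)
    | some w =>
        have hwle : w ≤ t.length := (Sc A t).follow_le l t.length w hfw
        rw [spec_Go_some A hfw] at hGo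
        cases hMj : M.2 j with
        | none =>
            have hC : ¬ condJ A a t m' M j := by
              rw [hcj, hfw]
              intro h
              rw [hMj] at h
              simp at h
            rw [if_neg hC]
            exact .notSucc _ _ _ hGo
        | some c =>
            have ht'len : (t.drop (t.length - w)).length = w := by simp; omega
            have hNb := ih (t.drop (t.length - w)) (by simp) (.Nb m' c (by omega))
            have hnb_eq : (Sc A (t.drop (t.length - w))).nbhd m' (t.drop (t.length - w)).length
                = (Sc A t).nbhd m' w := by
              rw [ht'len]
              exact nbhd_congr (Sc_drop_agree A t w hwle) m' w le_rfl
            have hGo' : PegRec (rules A) (.nt (.Go l hl))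
                (t.take (t.length - w) ++ t.drop (t.length - w))
                (some (t.take (t.length - w))) := by
              rw [List.take_append_drop]; exact hGo
            by_cases hc : c = (Sc A t).nbhd m' w
            · rw [spec_Nb_some A (by rw [hnb_eq, hc])] at hNb
              have hC : condJ A a t m' M j := by
                rw [hcj, hfw, hMj, hc]
              rw [if_pos hC]
              have hseq := PegRec.seqOk (R := rules A) (.nt (.Go l hl))
                (.nt (.Nb m' c (by omega))) (t.take (t.length - w))
                (t.drop (t.length - w)) [] hGo' hNb
              rw [List.take_append_drop] at hseq
              exact .andSucc _ _ _ hseq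
            · rw [spec_Nb_none A (by rw [hnb_eq]; exact fun h => hc h.symm)] at hNb
              have hC : ¬ condJ A a t m' M j := by
                rw [hcj, hfw]
                intro h
                rw [hMj] at h
                exact hc (Option.some_inj.mp h)
              rw [if_neg hC]
              have hseq := PegRec.seqFail₂ (R := rules A) (.nt (.Go l hl))
                (.nt (.Nb m' c (by omega))) (t.take (t.length - w))
                (t.drop (t.length - w)) hGo' hNb
              rw [List.take_append_drop] at hseq
              exact .andFail _ _ hseq
  · -- self
    have hcj : condJ A a t m' M j = (M.2 j = some (trN M)) := by
      unfold condJ; rw [hps]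
    have hco : checkOne A (outf A a t).2.2 hm M j = gif (M.2 j = some (trN M)) .eps := by
      unfold checkOne; rw [hps]
    rw [hco, hcj]
    by_cases h : M.2 j = some (trN M)
    · rw [gif_pos h, if_pos h]; exact .eps t
    · rw [gif_neg h, if_neg h]; exact .fail t
  · -- missing
    have hcj : condJ A a t m' M j = (M.2 j = none) := by
      unfold condJ; rw [hps]
    have hco : checkOne A (outf A a t).2.2 hm M j = gif (M.2 j = none) .eps := by
      unfold checkOne; rw [hps]
    rw [hco, hcj]
    by_cases h : M.2 j = none
    · rw [gif_pos h, if_pos h]; exact .eps t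
    · rw [gif_neg h, if_neg h]; exact .fail t

/-- The `Nb` case of the main lemma. -/
theorem nb_spec (z : List σ)
    (ih : ∀ z' : List σ, z'.length < z.length → ∀ B, PegRec (rules A) (.nt B) z' (spec A B z'))
    (m : ℕ) (hm : m ≤ A.k) (M : Nbhd A.d A.Γ m) :
    PegRec (rules A) (rules A (.Nb m M hm)) z (spec A (.Nb m M hm) z) := by
  cases z with
  | nil =>
      have hact : (Sc A []).nbhd m 0 = initN A.d A.Γ m := by rw [Sc_nil, init_nbhd]
      by_cases hM : M = initN A.d A.Γ m
      · rw [spec_Nb_some A (hact.trans hM.symm)]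
        refine .andSucc _ _ [] (.choice₁ _ _ _ _ ?_)
        rw [gif_pos hM]
        exact .notFail _ _ (anyE_nil A)
      · rw [spec_Nb_none A (by rw [List.length_nil, hact]; exact fun h => hM h.symm)]
        refine .andFail _ _ (.choice₂ _ _ _ _ ?_ ?_)
        · rw [gif_neg hM]; exact .fail _
        · refine bigchoice_map_none ?_
          rintro ⟨b, q', N'⟩ _
          exact seq_term_nil
  | cons a t =>
      have hlt : t.length < (a :: t).length := by simp
      have hlab := label_top A a t
      have hbase : PegRec (rules A)
          (gif (M = initN A.d A.Γ m) (.notP (anyE A))) (a :: t) none := by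
        by_cases hM : M = initN A.d A.Γ m
        · rw [gif_pos hM]; exact .notSucc _ _ _ (anyE_cons A a t)
        · rw [gif_neg hM]; exact .fail _
      have hother : ∀ b q' N', (b, q', N') ≠ (a, st A t, (Sc A t).nbhd A.k t.length) →
          PegRec (rules A) (.seq (.term b) (nbInner A b q' N' m hm M)) (a :: t) none := by
        intro b q' N' hne
        by_cases hb : b = a
        · subst hb
          unfold nbInner
          by_cases hcnd : nlabel M = some (A.δ q' b N').2.1
          · rw [gif_pos hcnd]
            by_cases hq' : st A t = q'
            · have hN' : (Sc A t).nbhd A.k t.length ≠ N' := by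
                intro h
                exact hne (by rw [hq', h])
              have hNb := ih t hlt (.Nb A.k N' le_rfl)
              rw [spec_Nb_none A hN'] at hNb
              have hSt := ih t hlt (.St q')
              rw [spec_St_some A hq'] at hSt
              exact seq_term_none
                (seq_pred (.andSucc _ _ _ hSt) (.seqFail₁ _ _ _ (.andFail _ _ hNb)))
            · have hSt := ih t hlt (.St q')
              rw [spec_St_none A hq'] at hSt
              exact seq_term_none (.seqFail₁ _ _ _ (.andFail _ _ hSt))
          · rw [gif_neg hcnd]
            exact seq_term_none (.fail t)
        · exact seq_term_mismatch hb
      have hδ : A.δ (st A t) a ((Sc A t).nbhd A.k t.length) = outf A a t := rfl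
      by_cases hMeq : (Sc A (a :: t)).nbhd m (a :: t).length = M
      · rw [spec_Nb_some A hMeq]
        refine .andSucc _ _ [a] (.choice₂ _ _ _ _ hbase ?_)
        refine bigchoice_map_some
          (mem_allTup A (a, st A t, (Sc A t).nbhd A.k t.length)) ?_ ?_
        · have hcnd : nlabel M = some (outf A a t).2.1 := by
            rw [← hMeq, nlabel_nbhd, List.length_cons]
            exact hlab
          have hSt := ih t hlt (.St (st A t))
          rw [spec_St_some A rfl] at hSt
          have hNb := ih t hlt (.Nb A.k ((Sc A t).nbhd A.k t.length) le_rfl)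
          rw [spec_Nb_some A rfl] at hNb
          have hchecks : PegRec (rules A) (checks A m hm M (outf A a t).2.2) t (some []) := by
            cases m with
            | zero => exact .eps t
            | succ m' =>
                refine bigseq_ofFn_some ?_
                intro j
                have h := checkOne_eval A a t ih m' hm M j
                rw [if_pos ?_] at h
                · exact h
                · have hM' : M = (Sc A (a :: t)).nbhd (m' + 1) (t.length + 1) := by
                    rw [← hMeq, List.length_cons]
                  rw [hM']
                  exact condJ_act A a t m' j
          refine seq_term_some ?_
          unfold nbInner
          rw [hδ, gif_pos hcnd]
          exact seq_pred (.andSucc _ _ _ hSt) (seq_pred (.andSucc _ _ _ hNb) hchecks)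
        · rintro ⟨b, q', N'⟩ _ hne
          exact hother b q' N' hne
      · rw [spec_Nb_none A hMeq]
        refine .andFail _ _ (.choice₂ _ _ _ _ hbase ?_)
        refine bigchoice_map_none ?_
        rintro ⟨b, q', N'⟩ _
        by_cases hne : (b, q', N') = (a, st A t, (Sc A t).nbhd A.k t.length)
        · simp only [Prod.mk.injEq] at hne
          obtain ⟨hb, hq, hN⟩ := hne
          rw [hb, hq, hN]
          by_cases hcnd : nlabel M = some (outf A a t).2.1
          · have hSt := ih t hlt (.St (st A t))
            rw [spec_St_some A rfl] at hSt
            have hNb := ih t hlt (.Nb A.k ((Sc A t).nbhd A.k t.length) le_rfl)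
            rw [spec_Nb_some A rfl] at hNb
            have hchecks : PegRec (rules A) (checks A m hm M (outf A a t).2.2) t none := by
              cases m with
              | zero =>
                  exfalso
                  apply hMeq
                  rw [List.length_cons]
                  show (Sc A (a :: t)).label (t.length + 1) = M
                  rw [hlab]
                  exact hcnd.symm
              | succ m' =>
                  by_cases hall : ∀ j, condJ A a t m' M j
                  · exfalso
                    apply hMeq
                    rw [List.length_cons]
                    refine (consist_unique (m' + 1) M
                      (consist_of_condJ A a t m' M ?_ hall)).symm
                    rw [hlab]
                    exact hcnd
                  · push_neg at hall
                    obtain ⟨j₀, hj₀⟩ := hall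
                    refine bigseq_ofFn_none ?_ j₀ ?_
                    · intro j
                      have h := checkOne_eval A a t ih m' hm M j
                      by_cases hcj : condJ A a t m' M j
                      · rw [if_pos hcj] at h; exact Or.inl h
                      · rw [if_neg hcj] at h; exact Or.inr h
                    · have h := checkOne_eval A a t ih m' hm M j₀
                      rw [if_neg hj₀] at h
                      exact h
            refine seq_term_none ?_
            unfold nbInner
            rw [hδ, gif_pos hcnd]
            exact seq_pred (.andSucc _ _ _ hSt) (seq_pred (.andSucc _ _ _ hNb) hchecks)
          · refine seq_term_none ?_
            unfold nbInner
            rw [hδ, gif_neg hcnd]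
            exact .fail t
        · exact hother b q' N' hne

end Construction
namespace Construction

open PegAux ScAux
open scoped Classical

variable {σ : Type} [Fintype σ] (A : SAutomaton σ)

/-- Every non-terminal computes its specification on every input. -/
theorem spec_correct : ∀ (z : List σ) (B : NT σ A), PegRec (rules A) (.nt B) z (spec A B z) := by
  have main : ∀ (n : ℕ) (z : List σ), z.length = n →
      ∀ B, PegRec (rules A) (.nt B) z (spec A B z) := by
    intro n
    induction n using Nat.strong_induction_on with
    | _ n ihn =>
      intro z hz
      have ih : ∀ z' : List σ, z'.length < z.length →
          ∀ B, PegRec (rules A) (.nt B) z' (spec A B z') := by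
        intro z' hlt B
        exact ihn z'.length (by omega) z' rfl B
      have hSt : ∀ q, PegRec (rules A) (.nt (.St q)) z (spec A (.St q) z) :=
        fun q => .ntRule _ _ _ (st_spec A z ih q)
      have hGoE : ∀ i, PegRec (rules A) (.nt (.GoE i)) z (spec A (.GoE i) z) :=
        fun i => .ntRule _ _ _ (goE_spec A z ih i)
      have hRest : PegRec (rules A) (.nt .Rest) z (some z) :=
        .ntRule _ _ _ (rest_spec A z ih)
      intro B
      cases B with
      | St q => exact hSt q
      | Nb m M hm => exact .ntRule _ _ _ (nb_spec A z ih m hm M)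
      | GoE i => exact hGoE i
      | Go l hl => exact .ntRule _ _ _ (go_spec A z ih hGoE l hl)
      | Rest => exact hRest
      | Start => exact .ntRule _ _ _ (start_spec A z hSt hRest)
  exact fun z B => main z.length z rfl B

end Construction

theorem scaffolding_to_peg' (σ : Type) [Fintype σ] (A : SAutomaton σ) :
    ∃ G : PEG σ, G.Total ∧ G.Lang = { x : List σ | x.reverse ∈ A.Lang } := by
  classical
  refine ⟨⟨Construction.NT σ A, Construction.finNT σ A, Construction.rules A, .Start⟩, ?_, ?_⟩
  · intro e x
    exact PegAux.total_of_grounded (Construction.rank A) (Construction.rules_grounded A) e x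
  · ext x
    simp only [PEG.Lang, Set.mem_setOf_eq, SAutomaton.Lang]
    constructor
    · intro h
      have hspec := Construction.spec_correct A x .Start
      have hd : (some x : Option (List σ)) = Construction.spec A .Start x :=
        PegAux.det h _ hspec
      by_contra hf
      rw [show Construction.spec A .Start x = none by
        simp only [Construction.spec, Construction.st]
        exact if_neg hf] at hd
      cases hd
    · intro h
      have hspec := Construction.spec_correct A x .Start
      rw [show Construction.spec A .Start x = some x by
        simp only [Construction.spec, Construction.st]
        exact if_pos h] at hspec
      exact hspec

/-- For every scaffolding automaton `A` over a finite alphabet `Σ`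
there is a total PEG recognising exactly the reversal of the language decided
by `A`. -/
theorem scaffolding_to_peg (σ : Type) [Fintype σ] (A : SAutomaton σ) :
    ∃ G : PEG σ, G.Total ∧ G.Lang = { x : List σ | x.reverse ∈ A.Lang } := by
  exact scaffolding_to_peg' σ A
end

section
/- For the language K over the alphabet {0,1,#} and for every D ∈ ℕ, the number of (K, (D+1)·2^D, D)-equivalence classes satisfies E_K((D+1)·2^D, D) ≥ 2^(2^D). -/
/-! ## Online Turing machines and the equivalence-class counting method -/

/-- A head move of a Turing machine. -/
inductive TMMove : Type where
  | left : TMMove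
  | stay : TMMove
  | right : TMMove

/-- The displacement of a head move. -/
def TMMove.offset : TMMove → ℤ
  | .left => -1
  | .stay => 0
  | .right => 1

/-- The shortest (most-significant-bit-first) binary representation of a
natural number, as a list of booleans; by convention `0` is represented by `"0"`. -/
def natBinRep (n : ℕ) : List Bool :=
  if n = 0 then [false] else (Nat.bits n).reverse

/-- An online (multi-tape) Turing machine with input alphabet `σ`: it has
`tapes + 1` work tapes (tape `0` being the auxiliary tape that initially holds
the input length in binary), and a one-way read-only input tape.  At each step
the transition function sees the current state, the input symbol under the
input head (`none` when past the end of the input) and the symbols under the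
work-tape heads, and produces a new state, a flag telling whether to advance
the input head (thereby reading a new input symbol), and a write/move action
for each work tape. -/
structure OnlineTM (σ : Type) : Type 1 where
  Q : Type
  finQ : Finite Q
  Γ : Type
  finΓ : Finite Γ
  blank : Γ
  sym0 : Γ
  sym1 : Γ
  tapes : ℕ
  q0 : Q
  Halt : Set Q
  F : Set Q
  δ : Q → Option σ → (Fin (tapes + 1) → Γ) →
        Q × Bool × (Fin (tapes + 1) → Γ × TMMove)

/-- A configuration of an online Turing machine. -/
structure OCfg {σ : Type} (M : OnlineTM σ) : Type where
  q : M.Q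
  ipos : ℕ
  hd : Fin (M.tapes + 1) → ℤ
  tape : Fin (M.tapes + 1) → ℤ → M.Γ

/-- The initial configuration on an input of length `n`: initial state, input
head at the start, work tapes blank except the auxiliary tape `0`, which holds
the binary representation of `n` in cells `0, …`. -/
def OnlineTM.initCfg {σ : Type} (M : OnlineTM σ) (n : ℕ) : OCfg M :=
  { q := M.q0
    ipos := 0
    hd := fun _ => 0
    tape := fun i p =>
      if i = 0 ∧ 0 ≤ p ∧ p < (natBinRep n).length then
        (if (natBinRep n).getD p.toNat false then M.sym1 else M.sym0)
      else M.blank }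

open scoped Classical in
/-- A single computation step of an online Turing machine on input `x`
(halting states are absorbing). -/
noncomputable def OnlineTM.stepCfg {σ : Type} (M : OnlineTM σ) (x : List σ)
    (c : OCfg M) : OCfg M :=
  if c.q ∈ M.Halt then c
  else
    let t := M.δ c.q x[c.ipos]? (fun i => c.tape i (c.hd i))
    { q := t.1
      ipos := if t.2.1 then c.ipos + 1 else c.ipos
      hd := fun i => c.hd i + (t.2.2 i).2.offset
      tape := fun i p => if p = c.hd i then (t.2.2 i).1 else c.tape i p }

/-- The configuration of `M` on input `x` after `i` steps. -/
noncomputable def OnlineTM.runCfg {σ : Type} (M : OnlineTM σ) (x : List σ)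
    (i : ℕ) : OCfg M :=
  (M.stepCfg x)^[i] (M.initCfg x.length)

/-- `M` decides `L` doing at most `t(n)` steps of computation per input symbol:
on every input `x` of length `n`, the machine halts after having read the whole
input, it accepts iff `x ∈ L`, and during the computation the input head never
stays put for more than `t(n)` consecutive steps (i.e. at most `t(n)` steps are
performed between consecutive readings of input symbols, before the first
reading and after the last one). -/
def OnlineTM.DecidesIn {σ : Type} (M : OnlineTM σ) (L : Set (List σ))
    (t : ℕ → ℕ) : Prop :=
  ∀ x : List σ, ∃ N : ℕ,
    (M.runCfg x N).q ∈ M.Halt ∧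
    (∀ i < N, (M.runCfg x i).q ∉ M.Halt) ∧
    (M.runCfg x N).ipos = x.length ∧
    ((M.runCfg x N).q ∈ M.F ↔ x ∈ L) ∧
    (∀ i j : ℕ, i ≤ j → j ≤ N →
      (M.runCfg x i).ipos = (M.runCfg x j).ipos → j - i ≤ t x.length)

/-- The class `Online(t(n))` of languages over `σ` decidable by an online
Turing machine doing at most `t(n)` steps of computation per input symbol. -/
def OnlineClass (σ : Type) (t : ℕ → ℕ) : Set (Set (List σ)) :=
  { L | ∃ M : OnlineTM σ, M.DecidesIn L t }

/-- `(L,ℓ,m)`-equivalence (the parameter `ℓ` is implicit in the domain):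
`y₁ ≡ y₂` iff appending any string of length `m` leads to the same
membership in `L`. -/
def LEquiv {σ : Type} (L : Set (List σ)) (m : ℕ) (y₁ y₂ : List σ) : Prop :=
  ∀ x : List σ, x.length = m → (y₁ ++ x ∈ L ↔ y₂ ++ x ∈ L)

/-- `E_L(ℓ,m)`: the number of equivalence classes of strings of length `ℓ`
under `(L,ℓ,m)`-equivalence. -/
noncomputable def numClasses {σ : Type} (L : Set (List σ)) (ℓ m : ℕ) : ℕ :=
  Nat.card (Quot (fun y₁ y₂ : { y : List σ // y.length = ℓ } =>
    LEquiv L m y₁.1 y₂.1))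

/-- `t(n) ∈ o(n/(log n)²)`, i.e. `t(n)·(log n)²/n → 0` as `n → ∞`. -/
def LittleOOfNOverLogSq (t : ℕ → ℕ) : Prop :=
  Filter.Tendsto (fun n : ℕ => (t n : ℝ) * (Real.log n) ^ 2 / n)
    Filter.atTop (nhds 0)

/-- The three-symbol alphabet `{0, 1, #}`. -/
inductive HSym : Type where
  | b0 : HSym
  | b1 : HSym
  | hash : HSym
  deriving DecidableEq

instance : Fintype HSym :=
  ⟨{HSym.b0, HSym.b1, HSym.hash}, by intro x; cases x <;> simp⟩

/-- A string over `{0,1,#}` is *binary* if it contains no `#`. -/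
def HSym.IsBin (w : List HSym) : Prop := HSym.hash ∉ w

/-- The language `K = { w₁#w₂#⋯#w_N#x : N ≥ 1, w₁,…,w_N,x ∈ {0,1}*, ∃ i, xʳ = wᵢ }`
over the alphabet `{0,1,#}`. -/
def LangK : Set (List HSym) :=
  { s | ∃ (ws : List (List HSym)) (x : List HSym),
      ws ≠ [] ∧ (∀ w ∈ ws, HSym.IsBin w) ∧ HSym.IsBin x ∧
      s = (ws.map (fun w => w ++ [HSym.hash])).flatten ++ x ∧
      x.reverse ∈ ws }

namespace KLower

/-- The `D`-bit binary encoding of `n` as a hash-free string. -/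
def encW (D n : ℕ) : List HSym :=
  List.ofFn (fun k : Fin D => if n.testBit k then HSym.b1 else HSym.b0)

lemma encW_length (D n : ℕ) : (encW D n).length = D := by simp [encW]

lemma encW_bin (D n : ℕ) : HSym.hash ∉ encW D n := by
  intro h
  rw [encW, List.mem_ofFn] at h
  obtain ⟨k, hk⟩ := h
  by_cases hb : n.testBit k <;> simp [hb] at hk

lemma encW_inj {D a b : ℕ} (ha : a < 2 ^ D) (hb : b < 2 ^ D)
    (h : encW D a = encW D b) : a = b := by
  apply Nat.eq_of_testBit_eq
  intro k
  by_cases hk : k < D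
  · have hf := (List.ofFn_inj.mp h)
    have := congrFun hf ⟨k, hk⟩
    by_cases hta : a.testBit k <;> by_cases htb : b.testBit k <;> simp_all
  · have h2 : 2 ^ D ≤ 2 ^ k := Nat.pow_le_pow_right (by norm_num) (le_of_not_gt hk)
    rw [Nat.testBit_lt_two_pow (lt_of_lt_of_le ha h2),
        Nat.testBit_lt_two_pow (lt_of_lt_of_le hb h2)]

def blockY (D : ℕ) (v : Fin (2 ^ D) → Bool) (j : Fin (2 ^ D)) : List HSym :=
  if v j then encW D j ++ [HSym.hash] else List.replicate (D + 1) HSym.hash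

def yOf (D : ℕ) (v : Fin (2 ^ D) → Bool) : List HSym :=
  (List.ofFn (blockY D v)).flatten

def blockW (D : ℕ) (v : Fin (2 ^ D) → Bool) (j : Fin (2 ^ D)) : List (List HSym) :=
  if v j then [encW D j] else List.replicate (D + 1) []

def wsOf (D : ℕ) (v : Fin (2 ^ D) → Bool) : List (List HSym) :=
  (List.ofFn (blockW D v)).flatten

lemma flatten_replicate_singleton {α : Type} (n : ℕ) (a : α) :
    (List.replicate n [a]).flatten = List.replicate n a := by
  induction n with
  | zero => rfl
  | succ n ih => simp [List.replicate_succ, ih]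

lemma yOf_length (D : ℕ) (v : Fin (2 ^ D) → Bool) :
    (yOf D v).length = (D + 1) * 2 ^ D := by
  have : ∀ j, (blockY D v j).length = D + 1 := by
    intro j
    unfold blockY
    split <;> simp [encW_length]
  simp [yOf, List.length_flatten, List.map_ofFn, Function.comp_def, this,
    Finset.sum_const, mul_comm]

lemma wsOf_bin (D : ℕ) (v : Fin (2 ^ D) → Bool) :
    ∀ w ∈ wsOf D v, HSym.hash ∉ w := by
  intro w hw
  rw [wsOf, List.mem_flatten] at hw
  obtain ⟨l, hl, hwl⟩ := hw
  rw [List.mem_ofFn] at hl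
  obtain ⟨j, rfl⟩ := hl
  unfold blockW at hwl
  split at hwl
  · simp only [List.mem_singleton] at hwl
    subst hwl; exact encW_bin D j
  · rw [List.eq_of_mem_replicate hwl]; simp

lemma wsOf_spec (D : ℕ) (v : Fin (2 ^ D) → Bool) :
    ((wsOf D v).map (fun w => w ++ [HSym.hash])).flatten = yOf D v := by
  rw [wsOf, List.map_flatten, List.flatten_flatten, List.map_ofFn, List.map_ofFn, yOf]
  congr 1
  rw [List.ofFn_inj]
  funext j
  simp only [Function.comp_apply, blockW, blockY]
  split
  · simp
  · rw [List.map_replicate]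
    simp only [List.nil_append]
    exact flatten_replicate_singleton _ _

lemma mem_wsOf (D : ℕ) (v : Fin (2 ^ D) → Bool) (i : Fin (2 ^ D)) (hv : v i = true) :
    encW D i ∈ wsOf D v := by
  rw [wsOf, List.mem_flatten]
  refine ⟨blockW D v i, ?_, ?_⟩
  · rw [List.mem_ofFn]; exact ⟨i, rfl⟩
  · simp [blockW, hv]

lemma hash_mem_head (b : List HSym) (t : List (List HSym)) (x : List HSym) :
    HSym.hash ∈ ((b :: t).map (fun w => w ++ [HSym.hash])).flatten ++ x := by
  simp

lemma hash_split {a b u v' : List HSym} (ha : HSym.hash ∉ a) (hb : HSym.hash ∉ b)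
    (h : a ++ HSym.hash :: u = b ++ HSym.hash :: v') : a = b ∧ u = v' := by
  induction a generalizing b with
  | nil =>
    cases b with
    | nil => simpa using h
    | cons c t =>
      exfalso
      simp only [List.nil_append, List.cons_append, List.cons.injEq] at h
      exact hb (h.1 ▸ List.mem_cons_self)
  | cons c t ih =>
    cases b with
    | nil =>
      exfalso
      simp only [List.nil_append, List.cons_append, List.cons.injEq] at h
      exact ha (h.1 ▸ List.mem_cons_self)
    | cons c' t' =>
      simp only [List.cons_append, List.cons.injEq] at h
      obtain ⟨rfl, h2⟩ := h
      have ha' : HSym.hash ∉ t := fun hm => ha (List.mem_cons_of_mem _ hm)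
      have hb' : HSym.hash ∉ t' := fun hm => hb (List.mem_cons_of_mem _ hm)
      obtain ⟨rfl, h3⟩ := ih ha' hb' h2
      exact ⟨rfl, h3⟩

lemma parse_unique : ∀ (ws₁ ws₂ : List (List HSym)) (x₁ x₂ : List HSym),
    (∀ w ∈ ws₁, HSym.hash ∉ w) → (∀ w ∈ ws₂, HSym.hash ∉ w) →
    HSym.hash ∉ x₁ → HSym.hash ∉ x₂ →
    (ws₁.map (fun w => w ++ [HSym.hash])).flatten ++ x₁ =
      (ws₂.map (fun w => w ++ [HSym.hash])).flatten ++ x₂ →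
    ws₁ = ws₂ ∧ x₁ = x₂ := by
  intro ws₁
  induction ws₁ with
  | nil =>
    intro ws₂ x₁ x₂ h1 h2 hx1 hx2 heq
    cases ws₂ with
    | nil => simpa using heq
    | cons b t =>
      exfalso
      apply hx1
      simp only [List.map_nil, List.flatten_nil, List.nil_append] at heq
      rw [heq]
      exact hash_mem_head _ _ _
  | cons a t ih =>
    intro ws₂ x₁ x₂ h1 h2 hx1 hx2 heq
    cases ws₂ with
    | nil =>
      exfalso
      apply hx2
      simp only [List.map_nil, List.flatten_nil, List.nil_append] at heq
      rw [← heq]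
      exact hash_mem_head _ _ _
    | cons b t' =>
      simp only [List.map_cons, List.flatten_cons, List.append_assoc] at heq
      rw [show ([HSym.hash] : List HSym) ++ ((List.map (fun w => w ++ [HSym.hash]) t).flatten ++ x₁)
            = HSym.hash :: ((List.map (fun w => w ++ [HSym.hash]) t).flatten ++ x₁) from rfl,
          show ([HSym.hash] : List HSym) ++ ((List.map (fun w => w ++ [HSym.hash]) t').flatten ++ x₂)
            = HSym.hash :: ((List.map (fun w => w ++ [HSym.hash]) t').flatten ++ x₂) from rfl] at heq
      obtain ⟨rfl, h3⟩ := hash_split (h1 a (List.mem_cons_self))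
        (h2 b (List.mem_cons_self)) heq
      obtain ⟨rfl, h4⟩ := ih t' x₁ x₂ (fun w hw => h1 w (List.mem_cons_of_mem _ hw))
        (fun w hw => h2 w (List.mem_cons_of_mem _ hw)) hx1 hx2 h3
      exact ⟨rfl, h4⟩

lemma mem_iff (D : ℕ) (hD : 1 ≤ D) (v : Fin (2 ^ D) → Bool) (i : Fin (2 ^ D)) :
    yOf D v ++ (encW D i).reverse ∈ LangK ↔ v i = true := by
  constructor
  · rintro ⟨ws, x, hne, hbin, hxbin, heq, hmem⟩
    rw [← wsOf_spec D v] at heq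
    obtain ⟨hws, hx⟩ := parse_unique (wsOf D v) ws _ x (wsOf_bin D v) hbin
      (by simpa using encW_bin D i) hxbin heq
    subst hws
    rw [← hx, List.reverse_reverse] at hmem
    rw [wsOf, List.mem_flatten] at hmem
    obtain ⟨l, hl, hml⟩ := hmem
    rw [List.mem_ofFn] at hl
    obtain ⟨j, rfl⟩ := hl
    unfold blockW at hml
    split at hml
    · rename_i hj
      rw [List.mem_singleton] at hml
      have : (i : ℕ) = (j : ℕ) := encW_inj i.isLt j.isLt hml
      have : i = j := Fin.ext this
      subst this; exact hj
    · exfalso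
      have := List.eq_of_mem_replicate hml
      have hl := congrArg List.length this
      rw [encW_length] at hl
      simp at hl
      omega
  · intro hv
    refine ⟨wsOf D v, (encW D i).reverse, ?_, wsOf_bin D v, ?_, ?_, ?_⟩
    · intro h
      have := mem_wsOf D v i hv
      rw [h] at this
      simp at this
    · simpa [HSym.IsBin] using encW_bin D i
    · rw [wsOf_spec]
    · rw [List.reverse_reverse]; exact mem_wsOf D v i hv

instance fin_subtype (ℓ : ℕ) : Finite { y : List HSym // y.length = ℓ } :=
  (List.finite_length_eq HSym ℓ).to_subtype

lemma yOf_inequiv (D : ℕ) (hD : 1 ≤ D) (v₁ v₂ : Fin (2 ^ D) → Bool)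
    (h : LEquiv LangK D (yOf D v₁) (yOf D v₂)) : v₁ = v₂ := by
  funext i
  have hx : ((encW D i).reverse).length = D := by simp [encW_length]
  have := h (encW D i).reverse hx
  have h1 := mem_iff D hD v₁ i
  have h2 := mem_iff D hD v₂ i
  by_cases hb1 : v₁ i <;> by_cases hb2 : v₂ i <;> simp_all

end KLower

namespace KLower

lemma lequiv_equivalence (ℓ m : ℕ) :
    Equivalence (fun y₁ y₂ : { y : List HSym // y.length = ℓ } => LEquiv LangK m y₁.1 y₂.1) := by
  constructor
  · intro y x hx; rfl
  · intro y z h x hx; exact (h x hx).symm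
  · intro a b c h1 h2 x hx; exact (h1 x hx).trans (h2 x hx)

lemma quot_mk_eq_iff {ℓ m : ℕ} (y₁ y₂ : { y : List HSym // y.length = ℓ }) :
    (Quot.mk (fun a b : { y : List HSym // y.length = ℓ } => LEquiv LangK m a.1 b.1) y₁ =
      Quot.mk _ y₂) ↔ LEquiv LangK m y₁.1 y₂.1 := by
  rw [Quot.eq, Equivalence.eqvGen_iff (lequiv_equivalence ℓ m)]

lemma hash_mem_of_mem_LangK {s : List HSym} (hs : s ∈ LangK) : HSym.hash ∈ s := by
  obtain ⟨ws, x, hne, -, -, rfl, -⟩ := hs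
  cases ws with
  | nil => exact absurd rfl hne
  | cons w t => exact hash_mem_head w t x

lemma hash_mem_LangK : ([HSym.hash] : List HSym) ∈ LangK := by
  refine ⟨[[]], [], by simp, ?_, ?_, ?_, ?_⟩
  · intro w hw; rw [List.mem_singleton] at hw; subst hw; simp [HSym.IsBin]
  · simp [HSym.IsBin]
  · rfl
  · simp

lemma not_lequiv_hash_b0 : ¬ LEquiv LangK 0 [HSym.hash] [HSym.b0] := by
  intro h
  have := h [] rfl
  simp only [List.append_nil] at this
  have h1 : ([HSym.b0] : List HSym) ∈ LangK := this.mp hash_mem_LangK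
  have := hash_mem_of_mem_LangK h1
  simp at this

end KLower

/-- For every `D ∈ ℕ`,
`E_K((D+1)·2^D, D) ≥ 2^(2^D)`. -/
theorem K_numClasses_lower (D : ℕ) :
    2 ^ 2 ^ D ≤ numClasses LangK ((D + 1) * 2 ^ D) D := by
  haveI : Finite { y : List HSym // y.length = (D + 1) * 2 ^ D } := KLower.fin_subtype _
  rcases Nat.eq_zero_or_pos D with hD | hD
  · subst hD
    have hinj : Function.Injective (fun b : Bool =>
        (Quot.mk (fun y₁ y₂ : { y : List HSym // y.length = (0 + 1) * 2 ^ 0 } =>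
            LEquiv LangK 0 y₁.1 y₂.1)
          ⟨if b then [HSym.hash] else [HSym.b0], by cases b <;> rfl⟩)) := by
      intro b₁ b₂ hq
      cases b₁ <;> cases b₂
      · rfl
      · exfalso
        have h := (KLower.quot_mk_eq_iff _ _).mp hq
        exact KLower.not_lequiv_hash_b0 (fun x hx => (h x hx).symm)
      · exfalso
        have h := (KLower.quot_mk_eq_iff _ _).mp hq
        exact KLower.not_lequiv_hash_b0 h
      · rfl
    calc (2 : ℕ) ^ 2 ^ 0 = Nat.card Bool := by simp [Nat.card_eq_fintype_card]
    _ ≤ _ := Nat.card_le_card_of_injective _ hinj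
  · have hinj : Function.Injective (fun v : Fin (2 ^ D) → Bool =>
        (Quot.mk (fun y₁ y₂ : { y : List HSym // y.length = (D + 1) * 2 ^ D } =>
            LEquiv LangK D y₁.1 y₂.1)
          ⟨KLower.yOf D v, KLower.yOf_length D v⟩)) := by
      intro v₁ v₂ hq
      exact KLower.yOf_inequiv D hD v₁ v₂ ((KLower.quot_mk_eq_iff _ _).mp hq)
    calc (2 : ℕ) ^ 2 ^ D = Nat.card (Fin (2 ^ D) → Bool) := by
          simp [Nat.card_eq_fintype_card, Fintype.card_fun]
    _ ≤ _ := Nat.card_le_card_of_injective _ hinj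
end
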